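/- arXiv:1404.7739 — 9 statements merged into one kernel-verified Lean document; each statement's English description precedes it below -/
import Mathlib

section
/- Let V be a k-dimensional F_q-subspace of F_{q^n} with subspace polynomial P_V(x) = x^{q^k} + sum_{j=0}^i alpha_j x^{q^j}. If alpha_s != 0 for some s in {1,...,i} and gcd(s,n) = t, then for all alpha, beta in F_{q^n}^* with alpha/beta not in F_{q^t}, we have alpha V != beta V. Consequently V has at least (q^n - 1)/(q^t - 1) distinct cyclic shifts. -/
open Pointwise

open Polynomial

noncomputable def subspacePoly {F : Type*} [Field F] [Fintype F] (V : Set F) : F[X] :=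
  ∏ v ∈ V.toFinite.toFinset, (X - C v)

lemma coeff_comp_C_mul_X {F : Type*} [CommRing F] (p : F[X]) (α : F) (m : ℕ) :
    (p.comp (C α * X)).coeff m = p.coeff m * α ^ m := by
  have hterm : ∀ b : ℕ, (C (p.coeff b) * (C α * X) ^ b).coeff m =
      if m = b then p.coeff b * α ^ b else 0 := by
    intro b
    rw [mul_pow, ← C_pow, ← mul_assoc, ← C_mul, coeff_C_mul, coeff_X_pow, mul_ite,
      mul_one, mul_zero]
  rw [comp_eq_sum_left, Polynomial.sum_def, finset_sum_coeff]
  calc ∑ b ∈ p.support, (C (p.coeff b) * (C α * X) ^ b).coeff m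
      = ∑ b ∈ p.support, if m = b then p.coeff b * α ^ b else 0 :=
        Finset.sum_congr rfl fun b _ => hterm b
    _ = if m ∈ p.support then p.coeff m * α ^ m else 0 := Finset.sum_ite_eq _ _ _
    _ = p.coeff m * α ^ m := by
        split_ifs with h
        · rfl
        · rw [Polynomial.notMem_support_iff.mp h, zero_mul]

lemma subspacePoly_smul_comp {F : Type*} [Field F] [Fintype F] (S : Set F) (α : F)
    (hα : α ≠ 0) :
    (subspacePoly (α • S)).comp (C α * X) =
      C α ^ S.toFinite.toFinset.card * subspacePoly S := by
  classical
  have himg : (α • S).toFinite.toFinset = S.toFinite.toFinset.image (fun v => α * v) := by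
    ext x
    constructor
    · intro hx
      obtain ⟨y, hy, rfl⟩ := Set.mem_smul_set.mp ((α • S).toFinite.mem_toFinset.mp hx)
      exact Finset.mem_image.mpr ⟨y, S.toFinite.mem_toFinset.mpr hy, rfl⟩
    · intro hx
      obtain ⟨y, hy, rfl⟩ := Finset.mem_image.mp hx
      exact (Set.Finite.mem_toFinset _).mpr
        (Set.mem_smul_set.mpr ⟨y, S.toFinite.mem_toFinset.mp hy, rfl⟩)
  have hinj : ∀ x ∈ S.toFinite.toFinset, ∀ y ∈ S.toFinite.toFinset,
      α * x = α * y → x = y := fun x _ y _ h => mul_left_cancel₀ hα h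
  rw [subspacePoly, subspacePoly, himg, Finset.prod_image hinj, prod_comp]
  have hfac : ∀ v ∈ S.toFinite.toFinset,
      ((X : F[X]) - C (α * v)).comp (C α * X) = C α * (X - C v) := by
    intro v _
    rw [sub_comp, X_comp, C_comp, mul_sub, ← C_mul]
  rw [Finset.prod_congr rfl hfac, Finset.prod_mul_distrib, Finset.prod_const]

lemma frob_gcd {F : Type*} [Field F] [Fintype F] {q n : ℕ} (hq2 : 2 ≤ q) (hn1 : 1 ≤ n)
    (hcard : Fintype.card F = q ^ n) {γ : F} (hγ : γ ≠ 0) :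
    ∀ s m : ℕ, γ ^ q ^ s = γ → γ ^ q ^ m = γ → γ ^ q ^ Nat.gcd s m = γ := by
  have hqn1 : 1 ≤ q ^ n := Nat.one_le_pow _ _ (by omega)
  have hco : ∀ a : ℕ, Nat.Coprime (q ^ a) (q ^ n - 1) := by
    intro a
    apply Nat.Coprime.pow_left
    have h1 : Nat.gcd q (q ^ n - 1) ∣ q ^ n :=
      dvd_trans (Nat.gcd_dvd_left _ _) (dvd_pow_self q (by omega))
    have h2 : Nat.gcd q (q ^ n - 1) ∣ q ^ n - 1 := Nat.gcd_dvd_right _ _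
    have h3 : Nat.gcd q (q ^ n - 1) ∣ q ^ n - (q ^ n - 1) := Nat.dvd_sub h1 h2
    have h4 : q ^ n - (q ^ n - 1) = 1 := by omega
    rw [h4] at h3
    exact Nat.eq_one_of_dvd_one h3
  have pone : ∀ δ : F, δ ≠ 0 → δ ^ (q ^ n - 1) = 1 := by
    intro δ hδ
    have := FiniteField.pow_card_sub_one_eq_one δ hδ
    rwa [hcard] at this
  have pcancel : ∀ a b : ℕ, γ ^ q ^ a = γ → γ ^ q ^ (a + b) = γ → γ ^ q ^ b = γ := by
    intro a b ha hab
    have hγb : γ ^ q ^ b ≠ 0 := pow_ne_zero _ hγ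
    set δ : F := γ ^ q ^ b / γ with hδdef
    have hδ : δ ≠ 0 := div_ne_zero hγb hγ
    have h1 : δ ^ q ^ a = 1 := by
      rw [hδdef, div_pow, ← pow_mul, ← pow_add, Nat.add_comm b a, hab, ha, div_self hγ]
    have h2 : δ ^ (q ^ n - 1) = 1 := pone δ hδ
    have h3 : δ ^ Nat.gcd (q ^ a) (q ^ n - 1) = 1 := pow_gcd_eq_one.mpr ⟨h1, h2⟩
    rw [hco a, pow_one] at h3
    have : γ ^ q ^ b = γ := by
      field_simp [hδdef] at h3
      rwa [hδdef, div_eq_one_iff_eq hγ] at h3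
    exact this
  have pmul : ∀ a c : ℕ, γ ^ q ^ a = γ → γ ^ q ^ (a * c) = γ := by
    intro a c ha
    induction c with
    | zero => simp
    | succ c ih =>
      have : a * (c + 1) = a * c + a := by ring
      rw [this, pow_add, pow_mul, ih, ha]
  intro s m
  induction s, m using Nat.gcd.induction with
  | H0 m => intro _ hm; simpa using hm
  | H1 s m hs ih =>
    intro hss hmm
    have hmod : γ ^ q ^ (m % s) = γ := by
      apply pcancel (s * (m / s)) (m % s) (pmul s (m / s) hss)
      rwa [Nat.div_add_mod] 
    rw [Nat.gcd_rec]
    exact ih hmod hss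

theorem stmt7 (q n k i s t : ℕ)
    (Fq F : Type*) [Field Fq] [Fintype Fq] [Field F] [Fintype F] [Algebra Fq F]
    (hq : Fintype.card Fq = q) (hn : Module.finrank Fq F = n)
    (V : Submodule Fq F) (hk : Module.finrank Fq V = k)
    (hi : i < k) (a : ℕ → F)
    (hP : subspacePoly (V : Set F) =
      X ^ q ^ k + ∑ j ∈ Finset.range (i + 1), C (a j) * X ^ q ^ j)
    (hs1 : 1 ≤ s) (hsi : s ≤ i) (has : a s ≠ 0) (ht : Nat.gcd s n = t) :
    (∀ α β : F, α ≠ 0 → β ≠ 0 → (α / β) ^ q ^ t ≠ α / β →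
      α • (V : Set F) ≠ β • (V : Set F)) ∧
    (q ^ n - 1) / (q ^ t - 1) ≤
      Set.ncard {W : Set F | ∃ α : F, α ≠ 0 ∧ W = α • (V : Set F)} := by
  classical
  have hq2 : 2 ≤ q := by
    have := Fintype.one_lt_card (α := Fq)
    omega
  have hcardF : Fintype.card F = q ^ n := by
    rw [← hq, ← hn]; exact Module.card_eq_pow_finrank
  have hn1 : 1 ≤ n := by
    by_contra h
    have hn0 : n = 0 := by omega
    rw [hn0, pow_zero] at hcardF
    have := Fintype.one_lt_card (α := F)
    omega
  set T : Finset F := (V : Set F).toFinite.toFinset with hT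
  have hmemT : ∀ x : F, x ∈ T ↔ x ∈ (V : Set F) := fun x => Set.Finite.mem_toFinset _
  set N := T.card with hNdef
  have hPN : (subspacePoly (V : Set F)).natDegree = N := by
    rw [subspacePoly, natDegree_prod _ _ (fun v _ => X_sub_C_ne_zero v)]
    simp only [natDegree_X_sub_C, Finset.sum_const, smul_eq_mul, mul_one]
    rfl
  have hpowinj : ∀ j j' : ℕ, q ^ j = q ^ j' → j = j' :=
    fun j j' h => Nat.pow_right_injective hq2 h
  have hcs : ∀ j, j ≤ i → (subspacePoly (V : Set F)).coeff (q ^ j) = a j := by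
    intro j hj
    rw [hP, coeff_add, coeff_X_pow,
      if_neg (fun h => absurd (hpowinj _ _ h) (by omega)), zero_add, finset_sum_coeff]
    rw [Finset.sum_eq_single j]
    · simp [coeff_C_mul, coeff_X_pow]
    · intro b _ hbj
      rw [coeff_C_mul, coeff_X_pow, if_neg (fun h => hbj (hpowinj _ _ h.symm)), mul_zero]
    · intro h; exact absurd (Finset.mem_range.mpr (Nat.lt_succ_of_le hj)) h
  have hc1 : (subspacePoly (V : Set F)).coeff 1 = a 0 := by
    have := hcs 0 (Nat.zero_le i)
    rwa [pow_zero] at this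
  have ha0 : a 0 ≠ 0 := by
    have h0T : (0 : F) ∈ T := (hmemT 0).mpr V.zero_mem
    have hPsplit : subspacePoly (V : Set F) = X * ∏ v ∈ T.erase 0, (X - C v) := by
      rw [subspacePoly, ← Finset.mul_prod_erase _ _ h0T]
      simp
    have hcoeff1 : (subspacePoly (V : Set F)).coeff 1 = ∏ v ∈ T.erase 0, (0 - v) := by
      rw [hPsplit, show (1 : ℕ) = 0 + 1 from rfl, coeff_X_mul,
        coeff_zero_eq_eval_zero, eval_prod]
      simp
    rw [← hc1, hcoeff1]
    rw [Finset.prod_ne_zero_iff]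
    intro v hv
    have : v ≠ 0 := (Finset.mem_erase.mp hv).1
    intro h
    exact this (by simpa using h)
  have hshift : ∀ α : F, α ≠ 0 → ∀ m : ℕ,
      (subspacePoly (α • (V : Set F))).coeff m * α ^ m =
        α ^ N * (subspacePoly (V : Set F)).coeff m := by
    intro α hα m
    have hcomp := subspacePoly_smul_comp (V : Set F) α hα
    have h2 := congrArg (fun p : F[X] => p.coeff m) hcomp
    rw [coeff_comp_C_mul_X] at h2
    rw [h2, ← C_pow, coeff_C_mul]
  have hkey : ∀ α β : F, α ≠ 0 → β ≠ 0 → α • (V : Set F) = β • (V : Set F) →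
      (α / β) ^ q ^ t = α / β := by
    intro α β hα hβ hVab
    have hγ : α / β ≠ 0 := div_ne_zero hα hβ
    have hstep : ∀ m : ℕ, (subspacePoly (V : Set F)).coeff m ≠ 0 →
        (α / β) ^ m = (α / β) ^ N := by
      intro m hc
      have h1 := hshift α hα m
      have h2 := hshift β hβ m
      rw [hVab] at h1
      have h4 : α ^ N * β ^ m = β ^ N * α ^ m := by
        have h3 : α ^ N * (subspacePoly (V : Set F)).coeff m * β ^ m
            = β ^ N * (subspacePoly (V : Set F)).coeff m * α ^ m := by
          rw [← h1, ← h2]; ring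
        have h5 : (α ^ N * β ^ m) * (subspacePoly (V : Set F)).coeff m
            = (β ^ N * α ^ m) * (subspacePoly (V : Set F)).coeff m := by
          linear_combination h3
        exact mul_right_cancel₀ hc h5
      rw [div_pow, div_pow, div_eq_div_iff (pow_ne_zero _ hβ) (pow_ne_zero _ hβ)]
      linear_combination -h4
    have hq0 : 1 ≤ q ^ s := Nat.one_le_pow _ _ (by omega)
    have hms : q ^ s ≤ N := by
      rw [← hPN]
      exact le_natDegree_of_ne_zero (by rw [hcs s hsi]; exact has)
    have e1 : (α / β) ^ (N - q ^ s) = 1 := by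
      have h := hstep (q ^ s) (by rw [hcs s hsi]; exact has)
      have h' : (α / β) ^ (N - q ^ s) * (α / β) ^ q ^ s = 1 * (α / β) ^ q ^ s := by
        rw [← pow_add, Nat.sub_add_cancel hms, one_mul, ← h]
      exact mul_right_cancel₀ (pow_ne_zero _ hγ) h'
    have e2 : (α / β) ^ (N - 1) = 1 := by
      have h := hstep 1 (by rw [hc1]; exact ha0)
      have h' : (α / β) ^ (N - 1) * (α / β) ^ 1 = 1 * (α / β) ^ 1 := by
        rw [← pow_add, Nat.sub_add_cancel (le_trans hq0 hms), one_mul, ← h]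
      exact mul_right_cancel₀ (pow_ne_zero _ hγ) h'
    have e3 : (α / β) ^ (q ^ s - 1) = 1 := by
      have h : (α / β) ^ (N - q ^ s) * (α / β) ^ (q ^ s - 1) = (α / β) ^ (N - 1) := by
        rw [← pow_add]; congr 1; omega
      rw [e1, one_mul] at h
      rw [h, e2]
    have f1 : (α / β) ^ q ^ s = α / β := by
      have h' : (α / β) ^ (q ^ s - 1 + 1) = α / β := by
        rw [pow_succ, e3, one_mul]
      rwa [Nat.sub_add_cancel hq0] at h'
    have f2 : (α / β) ^ q ^ n = α / β := by
      have hp : (α / β) ^ (q ^ n - 1) = 1 := by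
        have h := FiniteField.pow_card_sub_one_eq_one (α / β) hγ
        rwa [hcardF] at h
      have hqn : 1 ≤ q ^ n := Nat.one_le_pow _ _ (by omega)
      have h' : (α / β) ^ (q ^ n - 1 + 1) = α / β := by
        rw [pow_succ, hp, one_mul]
      rwa [Nat.sub_add_cancel hqn] at h'
    have hfg := frob_gcd hq2 hn1 hcardF hγ s n f1 f2
    rwa [ht] at hfg
  constructor
  · intro α β hα hβ hne hV
    exact hne (hkey α β hα hβ hV)
  have htpos : 1 ≤ t := by
    by_contra h
    have ht0 : t = 0 := by omega
    rw [ht0] at ht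
    have := Nat.eq_zero_of_gcd_eq_zero_left ht
    omega
  have hqt : 2 ≤ q ^ t := le_trans hq2 (Nat.le_self_pow (by omega) q)
  have hpos : 0 < q ^ t - 1 := by omega
  set f : F → Set F := fun α => α • (V : Set F) with hf
  set T0 : Finset F := Finset.univ.filter (fun x : F => x ≠ 0) with hT0
  have hT0card : T0.card = q ^ n - 1 := by
    rw [hT0, Finset.filter_ne', Finset.card_erase_of_mem (Finset.mem_univ 0),
      Finset.card_univ, hcardF]
  set Rf : Finset F := Finset.univ.filter (fun x : F => x ≠ 0 ∧ x ^ q ^ t = x) with hRfdef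
  have hRf : Rf.card ≤ q ^ t - 1 := by
    have hsub : Rf ⊆ ((X : F[X]) ^ (q ^ t - 1) - C 1).roots.toFinset := by
      intro x hxm
      obtain ⟨-, hx0, hxe⟩ := Finset.mem_filter.mp hxm
      rw [Multiset.mem_toFinset, mem_roots']
      refine ⟨X_pow_sub_C_ne_zero (by omega) 1, ?_⟩
      have h1 : x ^ (q ^ t - 1) * x = 1 * x := by
        rw [← pow_succ, Nat.sub_add_cancel (by omega), hxe, one_mul]
      have h2 : x ^ (q ^ t - 1) = 1 := mul_right_cancel₀ hx0 h1
      simp [IsRoot, h2]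
    calc Rf.card ≤ _ := Finset.card_le_card hsub
      _ ≤ Multiset.card (((X : F[X]) ^ (q ^ t - 1) - C 1).roots) :=
          Multiset.toFinset_card_le _
      _ ≤ ((X : F[X]) ^ (q ^ t - 1) - C 1).natDegree := card_roots' _
      _ = q ^ t - 1 := natDegree_X_pow_sub_C
  have hfib : ∀ b ∈ T0.image f, (T0.filter (fun x => f x = b)).card ≤ q ^ t - 1 := by
    intro b hb
    obtain ⟨β, hβT, rfl⟩ := Finset.mem_image.mp hb
    have hβ : β ≠ 0 := (Finset.mem_filter.mp hβT).2
    refine le_trans (Finset.card_le_card_of_injOn (fun x => x / β) ?_ ?_) hRf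
    · intro x hx
      obtain ⟨hxT, hxf⟩ := Finset.mem_filter.mp hx
      have hx0 : x ≠ 0 := (Finset.mem_filter.mp hxT).2
      exact Finset.mem_filter.mpr
        ⟨Finset.mem_univ _, div_ne_zero hx0 hβ, hkey x β hx0 hβ hxf⟩
    · intro x _ y _ hxy
      have h := congrArg (fun z : F => z * β) hxy
      simpa [div_mul_cancel₀, hβ] using h
  have hcount : q ^ n - 1 ≤ (q ^ t - 1) * (T0.image f).card := by
    rw [← hT0card]
    exact Finset.card_le_mul_card_image T0 _ hfib
  have hsetEq : {W : Set F | ∃ α : F, α ≠ 0 ∧ W = α • (V : Set F)} = ↑(T0.image f) := by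
    ext W
    simp only [Set.mem_setOf_eq, Finset.coe_image, Set.mem_image, Finset.mem_coe, hT0,
      Finset.mem_filter, Finset.mem_univ, true_and, hf]
    constructor
    · rintro ⟨α, hα, rfl⟩; exact ⟨α, hα, rfl⟩
    · rintro ⟨α, hα, rfl⟩; exact ⟨α, hα, rfl⟩
  rw [hsetEq, Set.ncard_coe_finset]
  calc (q ^ n - 1) / (q ^ t - 1)
      ≤ ((q ^ t - 1) * (T0.image f).card) / (q ^ t - 1) := Nat.div_le_div_right hcount
    _ = (T0.image f).card := Nat.mul_div_cancel_left _ hpos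
end

section
/- If the polynomial x^{q^k - 1} + x^{q-1} + 1 is irreducible over F_q and q^k - 1 divides n, then x^{q^k} + x^q + x divides x^{q^n} - x, i.e., it is a subspace polynomial with respect to F_{q^n}. -/
open Polynomial

/-- An irreducible polynomial over a finite field of cardinality `q` whose degree
divides `n` divides `X ^ q ^ n - X`. -/
lemma irred_dvd_X_pow_card_pow_sub_X (q n : ℕ) (Fq : Type*) [Field Fq] [Fintype Fq]
    (hq : Fintype.card Fq = q) (f : Fq[X]) (hirr : Irreducible f)
    (hdeg : f.natDegree ∣ n) : f ∣ (X ^ q ^ n - X : Fq[X]) := by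
  haveI := Fact.mk hirr
  obtain ⟨m, rfl⟩ := hdeg
  set L := AdjoinRoot f
  have hf0 : f ≠ 0 := hirr.ne_zero
  haveI : Module.Finite Fq L := (AdjoinRoot.powerBasis hf0).finite
  haveI : Finite L := Module.finite_of_finite Fq
  haveI : Fintype L := Fintype.ofFinite L
  have hcard : Fintype.card L = q ^ f.natDegree := by
    rw [Module.card_eq_pow_finrank (K := Fq) (V := L), hq,
      (AdjoinRoot.powerBasis hf0).finrank, AdjoinRoot.powerBasis_dim]
  have hroot : (AdjoinRoot.root f) ^ q ^ (f.natDegree * m) = AdjoinRoot.root f := by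
    rw [pow_mul, ← hcard]
    exact FiniteField.pow_card_pow m (AdjoinRoot.root f)
  rw [← AdjoinRoot.mk_eq_zero, ← AdjoinRoot.aeval_eq, map_sub, map_pow, aeval_X,
    hroot, sub_self]

theorem stmt9 (q n k : ℕ) (hk : 0 < k)
    (Fq : Type*) [Field Fq] [Fintype Fq] (hq : Fintype.card Fq = q)
    (hirr : Irreducible (X ^ (q ^ k - 1) + X ^ (q - 1) + 1 : Fq[X]))
    (hdvd : (q ^ k - 1) ∣ n) :
    (X ^ q ^ k + X ^ q + X : Fq[X]) ∣ (X ^ q ^ n - X) := by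
  set f : Fq[X] := X ^ (q ^ k - 1) + X ^ (q - 1) + 1 with hf
  have hq2 : 1 < q := hq ▸ Fintype.one_lt_card
  have hb1 : 1 ≤ q - 1 := by omega
  have hqk : q ≤ q ^ k := Nat.le_self_pow hk.ne' q
  have hab : q - 1 ≤ q ^ k - 1 := by omega
  -- the degree of f divides n
  have hdeg : f.natDegree ∣ n := by
    rcases lt_or_eq_of_le hab with h | h
    · -- q - 1 < q ^ k - 1 : leading term is X ^ (q ^ k - 1)
      have hlt : ((X : Fq[X]) ^ (q - 1) + 1).degree < ((X : Fq[X]) ^ (q ^ k - 1)).degree := by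
        refine lt_of_le_of_lt (degree_add_le _ _) ?_
        rw [degree_X_pow, degree_X_pow, degree_one]
        exact max_lt (by exact_mod_cast h) (by exact_mod_cast (by omega : 0 < q ^ k - 1))
      have : f.degree = (q ^ k - 1 : ℕ) := by
        rw [hf, add_assoc, degree_add_eq_left_of_degree_lt hlt, degree_X_pow]
      rw [natDegree_eq_of_degree_eq_some this]
      exact hdvd
    · -- q - 1 = q ^ k - 1
      have hf2 : f = C 2 * X ^ (q - 1) + 1 := by
        rw [hf, ← h, map_ofNat]; ring
      by_cases h2 : (2 : Fq) = 0
      · exfalso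
        rw [hf2, h2, map_zero, zero_mul, zero_add] at hirr
        exact hirr.not_isUnit isUnit_one
      · have hlt : (1 : Fq[X]).degree < (C 2 * X ^ (q - 1) : Fq[X]).degree := by
          rw [degree_one, degree_C_mul_X_pow _ h2]
          exact_mod_cast (by omega : 0 < q - 1)
        have : f.degree = (q - 1 : ℕ) := by
          rw [hf2, degree_add_eq_left_of_degree_lt hlt, degree_C_mul_X_pow _ h2]
        rw [natDegree_eq_of_degree_eq_some this, h]
        exact hdvd
  have hF : f ∣ (X ^ q ^ n - X : Fq[X]) := irred_dvd_X_pow_card_pow_sub_X q n Fq hq f hirr hdeg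
  have hX : (X : Fq[X]) ∣ (X ^ q ^ n - X : Fq[X]) :=
    dvd_sub (dvd_pow_self X (by positivity)) dvd_rfl
  -- f does not divide X
  have hfX : ¬ f ∣ (X : Fq[X]) := by
    intro hdvdX
    obtain ⟨g, hg⟩ := hdvdX
    rcases (irreducible_X (R := Fq)).isUnit_or_isUnit hg with hu | hu
    · exact hirr.not_isUnit hu
    · obtain ⟨r, hr, hrg⟩ := Polynomial.isUnit_iff.mp hu
      have := congrArg (eval 0) hg
      rw [eval_X, eval_mul, ← hrg, eval_C, hf] at this
      simp only [eval_add, eval_pow, eval_X, eval_one,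
        zero_pow (by omega : q ^ k - 1 ≠ 0), zero_pow (by omega : q - 1 ≠ 0)] at this
      rw [zero_add, zero_add, one_mul] at this
      exact hr.ne_zero this.symm
  have hcop : IsCoprime (X : Fq[X]) f := (hirr.coprime_iff_not_dvd.mpr hfX).symm
  have hXf : (X ^ q ^ k + X ^ q + X : Fq[X]) = X * f := by
    have h1 : q - 1 + 1 = q := by omega
    have h2 : q ^ k - 1 + 1 = q ^ k := by
      have : 1 ≤ q ^ k := by omega
      omega
    rw [hf, mul_add, mul_add, mul_one, ← pow_succ', ← pow_succ', h1, h2]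
  rw [hXf]
  exact hcop.mul_dvd hX hF
end

section
/- Suppose q^k - 1 divides n, x^{q^k-1} + x^{q-1} + 1 is irreducible over F_q, and V is the k-dimensional subspace of F_{q^n} whose subspace polynomial is x^{q^k} + x^q + x. Then the orbit code C = {alpha V : alpha in F_{q^n}^*} has exactly (q^n-1)/(q-1) codewords and any two distinct codewords U, W in C satisfy dim(U ∩ W) <= 1, i.e., minimum subspace distance at least 2k - 2. -/
open Pointwise

open Polynomial

section Aux

variable {q k : ℕ} {Fq F : Type*} [Field Fq] [Fintype Fq] [Field F] [Fintype F] [Algebra Fq F]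

/-- Elements of `F` fixed by `x ↦ x ^ q` lie in the image of `Fq`. -/
lemma aux_mem_range (hq : Fintype.card Fq = q) {γ : F} (hγ : γ ^ q = γ) :
    ∃ s : Fq, algebraMap Fq F s = γ := by
  classical
  have h2 : 1 < q := hq ▸ Fintype.one_lt_card
  set t : Finset F := Finset.univ.image (algebraMap Fq F) with ht
  set s : Finset F := Finset.univ.filter (fun x : F => x ^ q = x) with hs
  have hts : t ⊆ s := by
    intro x hx
    rw [ht, Finset.mem_image] at hx
    obtain ⟨a, -, rfl⟩ := hx
    rw [hs, Finset.mem_filter]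
    refine ⟨Finset.mem_univ _, ?_⟩
    rw [← map_pow, ← hq, FiniteField.pow_card]
  have htc : t.card = q := by
    rw [ht, Finset.card_image_of_injective _ (algebraMap Fq F).injective,
      Finset.card_univ, hq]
  have hsc : s.card ≤ q := by
    have hne : (X ^ q - X : F[X]) ≠ 0 := FiniteField.X_pow_card_sub_X_ne_zero F h2
    have hsub : s ⊆ (X ^ q - X : F[X]).roots.toFinset := by
      intro x hx
      rw [hs, Finset.mem_filter] at hx
      rw [Multiset.mem_toFinset, mem_roots hne]
      simp [sub_eq_zero, hx.2]
    calc s.card ≤ (X ^ q - X : F[X]).roots.toFinset.card := Finset.card_le_card hsub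
      _ ≤ Multiset.card (X ^ q - X : F[X]).roots := Multiset.toFinset_card_le _
      _ ≤ (X ^ q - X : F[X]).natDegree := card_roots' _
      _ = q := FiniteField.X_pow_card_sub_X_natDegree_eq F h2
  have hst : s = t := (Finset.eq_of_subset_of_card_le hts (htc ▸ hsc)).symm
  have hγs : γ ∈ s := by rw [hs, Finset.mem_filter]; exact ⟨Finset.mem_univ _, hγ⟩
  rw [hst, ht, Finset.mem_image] at hγs
  obtain ⟨a, -, ha⟩ := hγs
  exact ⟨a, ha⟩

/-- Every element of `V` is a root of the subspace polynomial. -/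
lemma aux_root (V : Submodule Fq F)
    (hPV : subspacePoly (V : Set F) = X ^ q ^ k + X ^ q + X)
    {v : F} (hv : v ∈ V) : v ^ q ^ k + v ^ q + v = 0 := by
  classical
  have h0 : (subspacePoly (V : Set F)).eval v = 0 := by
    unfold subspacePoly
    rw [eval_prod]
    refine Finset.prod_eq_zero ((V : Set F).toFinite.mem_toFinset.mpr hv) ?_
    simp
  rw [hPV] at h0
  simpa using h0

/-- The core independence argument. -/
lemma aux_core (hq : Fintype.card Fq = q) (V : Submodule Fq F)
    (hroot : ∀ v ∈ V, v ^ q ^ k + v ^ q + v = 0)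
    {u v δ : F} (hu : u ∈ V) (hv : v ∈ V) (hdu : δ * u ∈ V) (hdv : δ * v ∈ V)
    (hv0 : v ≠ 0) (hind : ∀ s : Fq, u ≠ s • v) : ∃ s : Fq, algebraMap Fq F s = δ := by
  have hu0 : u ≠ 0 := by
    intro h
    exact hind 0 (by simp [h])
  have Hu := hroot u hu
  have Hv := hroot v hv
  have Hdu := hroot _ hdu
  have Hdv := hroot _ hdv
  rw [mul_pow, mul_pow] at Hdu Hdv
  have Eu : (δ ^ q - δ ^ q ^ k) * u ^ q = (δ ^ q ^ k - δ) * u := by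
    linear_combination Hdu - δ ^ q ^ k * Hu
  have Ev : (δ ^ q - δ ^ q ^ k) * v ^ q = (δ ^ q ^ k - δ) * v := by
    linear_combination Hdv - δ ^ q ^ k * Hv
  by_cases hA : δ ^ q - δ ^ q ^ k = 0
  · have hB : δ ^ q ^ k - δ = 0 := by
      rw [hA, zero_mul] at Eu
      rcases mul_eq_zero.mp Eu.symm with h | h
      · exact h
      · exact absurd h hu0
    have : δ ^ q = δ := by
      have h1 : δ ^ q ^ k = δ := sub_eq_zero.mp hB
      have h2 : δ ^ q = δ ^ q ^ k := sub_eq_zero.mp hA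
      rw [h2, h1]
    exact aux_mem_range hq this
  · exfalso
    have h3 : (δ ^ q - δ ^ q ^ k) * (u ^ q * v) = (δ ^ q - δ ^ q ^ k) * (u * v ^ q) := by
      linear_combination v * Eu - u * Ev
    have key : u ^ q * v = u * v ^ q := mul_left_cancel₀ hA h3
    have hfix : (u / v) ^ q = u / v := by
      rw [div_pow, div_eq_div_iff (pow_ne_zero _ hv0) hv0]
      linear_combination key
    obtain ⟨s, hs⟩ := aux_mem_range hq hfix
    apply hind s
    rw [Algebra.smul_def, hs, div_mul_cancel₀ _ hv0]

/-- From rank at least two, extract a suitable pair of elements. -/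
lemma aux_pair (P : Submodule Fq F) (h2 : 2 ≤ Module.finrank Fq P) :
    ∃ x y : F, x ∈ P ∧ y ∈ P ∧ y ≠ 0 ∧ ∀ s : Fq, x ≠ s • y := by
  classical
  let b := Module.finBasis Fq P
  have hlt0 : 0 < Module.finrank Fq P := by omega
  have hlt1 : 1 < Module.finrank Fq P := by omega
  set i0 : Fin (Module.finrank Fq P) := ⟨0, hlt0⟩
  set i1 : Fin (Module.finrank Fq P) := ⟨1, hlt1⟩
  refine ⟨(b i0 : F), (b i1 : F), (b i0).2, (b i1).2, ?_, ?_⟩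
  · simpa [Submodule.coe_eq_zero] using b.ne_zero i1
  · intro s hxy
    have hP : b i0 = s • b i1 := by
      apply Subtype.ext
      simpa using hxy
    have h := congrArg (fun z => b.repr z i0) hP
    have h01 : i1 ≠ i0 := by simp [i0, i1, Fin.ext_iff]
    simp [Module.Basis.repr_self, Finsupp.single_apply, h01] at h

/-- In a rank-one submodule every element is a scalar multiple of a nonzero one. -/
lemma aux_rank_one (P : Submodule Fq F) (h1 : Module.finrank Fq P = 1)
    {w v0 : F} (hw : w ∈ P) (hv0 : v0 ∈ P) (h0 : v0 ≠ 0) : ∃ s : Fq, w = s • v0 := by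
  have h0' : (⟨v0, hv0⟩ : P) ≠ 0 := by simp [Submodule.mk_eq_zero, h0]
  obtain ⟨c, hc⟩ := (finrank_eq_one_iff_of_nonzero' (⟨v0, hv0⟩ : P) h0').mp h1 ⟨w, hw⟩
  refine ⟨c, ?_⟩
  have := congrArg (Subtype.val) hc
  simpa using this.symm

/-- Scaling by a nonzero element of the base field fixes the subspace. -/
lemma aux_smul_fixed (V : Submodule Fq F) {s : Fq} (hs : s ≠ 0) :
    (algebraMap Fq F s) • (V : Set F) = (V : Set F) := by
  ext x
  constructor
  · intro hx
    obtain ⟨y, hy, hyx⟩ := Set.mem_smul_set.mp hx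
    have h1 : x = s • y := by rw [← hyx]; exact algebraMap_smul F s y
    exact h1 ▸ V.smul_mem s hy
  · intro hx
    refine Set.mem_smul_set.mpr ⟨s⁻¹ • x, V.smul_mem s⁻¹ hx, ?_⟩
    rw [algebraMap_smul F s (s⁻¹ • x), smul_smul, mul_inv_cancel₀ hs, one_smul]

/-- If `δ` stabilizes `V` then `δ` comes from the base field. -/
lemma aux_stab (hq : Fintype.card Fq = q) (hk : 0 < k) (V : Submodule Fq F)
    (hkV : Module.finrank Fq V = k)
    (hroot : ∀ v ∈ V, v ^ q ^ k + v ^ q + v = 0) {δ : F} (hδ : δ ≠ 0)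
    (hfix : δ • (V : Set F) = (V : Set F)) : ∃ s : Fq, algebraMap Fq F s = δ := by
  have hmem : ∀ x ∈ V, δ * x ∈ V := by
    intro x hx
    have : δ • x ∈ δ • (V : Set F) := Set.smul_mem_smul_set hx
    rw [hfix] at this
    simpa [smul_eq_mul] using this
  rcases lt_or_ge 1 k with h2 | h1
  · obtain ⟨x, y, hx, hy, hy0, hind⟩ := aux_pair V (by omega : 2 ≤ Module.finrank Fq V)
    exact aux_core hq V hroot hx hy (hmem x hx) (hmem y hy) hy0 hind
  · have hk1 : k = 1 := by omega
    have hVne : V ≠ ⊥ := by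
      intro hbot
      rw [hbot] at hkV
      simp [finrank_bot] at hkV
      omega
    obtain ⟨v0, hv0, h00⟩ := (Submodule.ne_bot_iff V).mp hVne
    obtain ⟨s, hs⟩ := aux_rank_one V (by omega) (hmem v0 hv0) hv0 h00
    refine ⟨s, ?_⟩
    have : δ * v0 = algebraMap Fq F s * v0 := by
      rw [hs, Algebra.smul_def]
    exact (mul_right_cancel₀ h00 this).symm

/-- Two nonzero scalings give the same subspace only if they differ by a base-field scalar. -/
lemma aux_scale (hq : Fintype.card Fq = q) (hk : 0 < k) (V : Submodule Fq F)
    (hkV : Module.finrank Fq V = k)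
    (hroot : ∀ v ∈ V, v ^ q ^ k + v ^ q + v = 0) {α β : F} (hα : α ≠ 0) (hβ : β ≠ 0)
    (h : α • (V : Set F) = β • (V : Set F)) :
    ∃ s : Fq, s ≠ 0 ∧ algebraMap Fq F s = α * β⁻¹ := by
  have hδ : α * β⁻¹ ≠ 0 := mul_ne_zero hα (inv_ne_zero hβ)
  have hfix : (α * β⁻¹) • (V : Set F) = (V : Set F) := by
    calc (α * β⁻¹) • (V : Set F) = (β⁻¹ * α) • (V : Set F) := by rw [mul_comm]
      _ = β⁻¹ • α • (V : Set F) := mul_smul _ _ _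
      _ = β⁻¹ • β • (V : Set F) := by rw [h]
      _ = (β⁻¹ * β) • (V : Set F) := (mul_smul _ _ _).symm
      _ = (V : Set F) := by rw [inv_mul_cancel₀ hβ, one_smul]
  obtain ⟨s, hs⟩ := aux_stab hq hk V hkV hroot hδ hfix
  refine ⟨s, ?_, hs⟩
  intro h0
  rw [h0, map_zero] at hs
  exact hδ hs.symm

end Aux

theorem stmt10 (q n k : ℕ) (hk : 0 < k)
    (Fq F : Type*) [Field Fq] [Fintype Fq] [Field F] [Fintype F] [Algebra Fq F]
    (hq : Fintype.card Fq = q) (hn : Module.finrank Fq F = n)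
    (hdvd : (q ^ k - 1) ∣ n)
    (hirr : Irreducible (X ^ (q ^ k - 1) + X ^ (q - 1) + 1 : Fq[X]))
    (V : Submodule Fq F) (hkV : Module.finrank Fq V = k)
    (hPV : subspacePoly (V : Set F) = X ^ q ^ k + X ^ q + X) :
    Set.ncard {W : Submodule Fq F | ∃ α : F, α ≠ 0 ∧ (W : Set F) = α • (V : Set F)} =
      (q ^ n - 1) / (q - 1) ∧
    ∀ U ∈ {W : Submodule Fq F | ∃ α : F, α ≠ 0 ∧ (W : Set F) = α • (V : Set F)},
      ∀ W ∈ {W : Submodule Fq F | ∃ α : F, α ≠ 0 ∧ (W : Set F) = α • (V : Set F)},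
        U ≠ W → Module.finrank Fq ↥(U ⊓ W) ≤ 1 := by
  classical
  have hroot : ∀ v ∈ V, v ^ q ^ k + v ^ q + v = 0 := fun v hv => aux_root V hPV hv
  have hq2 : 1 < q := hq ▸ Fintype.one_lt_card
  constructor
  · -- counting
    set g : F → Submodule Fq F := fun α => V.map (LinearMap.mulLeft Fq α) with hg
    have gcoe : ∀ α : F, (g α : Set F) = α • (V : Set F) := by
      intro α
      ext x
      simp [hg, Set.mem_smul_set, smul_eq_mul, eq_comm]
    set T : Finset F := Finset.univ.filter (fun α : F => α ≠ 0) with hT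
    have hSet : {W : Submodule Fq F | ∃ α : F, α ≠ 0 ∧ (W : Set F) = α • (V : Set F)}
        = ↑(T.image g) := by
      ext W
      simp only [Set.mem_setOf_eq, Finset.coe_image, Set.mem_image, Finset.mem_coe,
        hT, Finset.mem_filter, Finset.mem_univ, true_and]
      constructor
      · rintro ⟨α, hα, hW⟩
        exact ⟨α, hα, SetLike.coe_injective ((gcoe α).trans hW.symm)⟩
      · rintro ⟨α, hα, rfl⟩
        exact ⟨α, hα, gcoe α⟩
    rw [hSet, Set.ncard_coe_finset]
    have hcardF : Fintype.card F = q ^ n := by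
      rw [← hq, ← hn]
      have := Module.card_fintype (Module.finBasis Fq F)
      simpa using this
    have hTcard : T.card = q ^ n - 1 := by
      rw [hT, Finset.filter_ne', Finset.card_erase_of_mem (Finset.mem_univ _),
        Finset.card_univ, hcardF]
    -- fibers
    have hfiber : ∀ W ∈ T.image g, (T.filter (fun β => g β = W)).card = q - 1 := by
      intro W hW
      obtain ⟨α₀, hα₀T, rfl⟩ := Finset.mem_image.mp hW
      have hα₀ : α₀ ≠ 0 := by
        rw [hT, Finset.mem_filter] at hα₀T
        exact hα₀T.2
      have hfe : T.filter (fun β => g β = g α₀)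
          = (Finset.univ.filter (fun s : Fq => s ≠ 0)).image
              (fun s => algebraMap Fq F s * α₀) := by
        ext β
        simp only [Finset.mem_filter, Finset.mem_image, Finset.mem_univ, true_and, hT]
        constructor
        · rintro ⟨hβ, hgb⟩
          have hsets : β • (V : Set F) = α₀ • (V : Set F) := by
            rw [← gcoe, ← gcoe, hgb]
          obtain ⟨s, hs0, hs⟩ := aux_scale hq hk V hkV hroot hβ hα₀ hsets
          refine ⟨s, hs0, ?_⟩
          rw [hs]
          field_simp
        · rintro ⟨s, hs0, rfl⟩
          have hsne : algebraMap Fq F s ≠ 0 := by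
            simpa using hs0
          constructor
          · exact mul_ne_zero hsne hα₀
          · apply SetLike.coe_injective
            rw [gcoe, gcoe, mul_comm, mul_smul, aux_smul_fixed V hs0]
      rw [hfe, Finset.card_image_of_injOn, Finset.filter_ne', Finset.card_erase_of_mem
        (Finset.mem_univ _), Finset.card_univ, hq]
      intro s₁ _ s₂ _ h
      exact (algebraMap Fq F).injective (mul_right_cancel₀ hα₀ h)
    have hcount : q ^ n - 1 = (T.image g).card * (q - 1) := by
      have h1 : T.card = ∑ W ∈ T.image g, (T.filter (fun β => g β = W)).card :=
        Finset.card_eq_sum_card_fiberwise (fun x hx => Finset.mem_image_of_mem g hx)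
      rw [← hTcard, h1, Finset.sum_congr rfl hfiber, Finset.sum_const, smul_eq_mul]
    exact (Nat.div_eq_of_eq_mul_left (by omega) hcount).symm
  · -- distance
    rintro U ⟨α, hα, hU⟩ W ⟨β, hβ, hW⟩ hne
    by_contra hcon
    push_neg at hcon
    obtain ⟨x, y, hx, hy, hy0, hind⟩ := aux_pair (U ⊓ W) (by omega)
    obtain ⟨hxU, hxW⟩ := Submodule.mem_inf.mp hx
    obtain ⟨hyU, hyW⟩ := Submodule.mem_inf.mp hy
    -- memberships in the scaled sets
    have hxA : x ∈ α • (V : Set F) := hU ▸ hxU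
    have hyA : y ∈ α • (V : Set F) := hU ▸ hyU
    have hxB : x ∈ β • (V : Set F) := hW ▸ hxW
    have hyB : y ∈ β • (V : Set F) := hW ▸ hyW
    have hmem : ∀ z : F, z ∈ α • (V : Set F) → α⁻¹ * z ∈ V := by
      intro z hz
      obtain ⟨w, hw, hwz⟩ := Set.mem_smul_set.mp hz
      have h1 : α⁻¹ * z = w := by
        rw [← hwz, smul_eq_mul, ← mul_assoc, inv_mul_cancel₀ hα, one_mul]
      rw [h1]; exact hw
    have hmem' : ∀ z : F, z ∈ β • (V : Set F) → β⁻¹ * z ∈ V := by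
      intro z hz
      obtain ⟨w, hw, hwz⟩ := Set.mem_smul_set.mp hz
      have h1 : β⁻¹ * z = w := by
        rw [← hwz, smul_eq_mul, ← mul_assoc, inv_mul_cancel₀ hβ, one_mul]
      rw [h1]; exact hw
    set u : F := β⁻¹ * x with hu
    set v : F := β⁻¹ * y with hv
    set δ : F := β * α⁻¹ with hδ
    have huV : u ∈ V := hmem' x hxB
    have hvV : v ∈ V := hmem' y hyB
    have hduV : δ * u ∈ V := by
      have : δ * u = α⁻¹ * x := by
        rw [hu, hδ]; field_simp
      rw [this]
      exact hmem x hxA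
    have hdvV : δ * v ∈ V := by
      have : δ * v = α⁻¹ * y := by
        rw [hv, hδ]; field_simp
      rw [this]
      exact hmem y hyA
    have hv0 : v ≠ 0 := by
      rw [hv]
      exact mul_ne_zero (inv_ne_zero hβ) hy0
    have hind' : ∀ s : Fq, u ≠ s • v := by
      intro s hs
      apply hind s
      have : x = β * (s • (β⁻¹ * y)) := by
        rw [← hs, hu, ← mul_assoc, mul_inv_cancel₀ hβ, one_mul]
      rw [this, mul_smul_comm, ← mul_assoc, mul_inv_cancel₀ hβ, one_mul]
    obtain ⟨s, hs⟩ := aux_core hq V hroot huV hvV hduV hdvV hv0 hind'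
    have hs0 : s ≠ 0 := by
      intro h0
      rw [h0, map_zero] at hs
      exact mul_ne_zero hβ (inv_ne_zero hα) hs.symm
    have hcoe : (W : Set F) = (U : Set F) := by
      calc (W : Set F) = β • (V : Set F) := hW
        _ = (α * δ) • (V : Set F) := by
            congr 1
            rw [hδ]
            field_simp
        _ = α • (δ • (V : Set F)) := mul_smul _ _ _
        _ = α • ((algebraMap Fq F s) • (V : Set F)) := by rw [hs]
        _ = α • (V : Set F) := by rw [aux_smul_fixed V hs0]
        _ = (U : Set F) := hU.symm
    exact hne (SetLike.coe_injective hcoe.symm)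
end

section
/- Let V be a k-dimensional F_q-subspace of F_{q^n} with P_V(x) = x^{q^k} + alpha_1 x^q + alpha_0 x, alpha_1 != 0. For i in {0,...,n-1}, there exists alpha in F_{q^n}^* with F^i(V) = alpha V if and only if (alpha_0^{(q^k - q)/(q-1)} / alpha_1^{(q^k - 1)/(q-1)})^{q^i - 1} = 1. -/
open Pointwise

open Polynomial

theorem stmt11 (q n k i : ℕ)
    (Fq F : Type*) [Field Fq] [Fintype Fq] [Field F] [Fintype F] [Algebra Fq F]
    (hq : Fintype.card Fq = q) (hn : Module.finrank Fq F = n)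
    (V : Submodule Fq F) (hkV : Module.finrank Fq V = k)
    (a0 a1 : F) (ha1 : a1 ≠ 0)
    (hP : subspacePoly (V : Set F) = X ^ q ^ k + C a1 * X ^ q + C a0 * X)
    (hi : i < n) :
    (∃ α : F, α ≠ 0 ∧ (fun x : F => x ^ q ^ i) '' (V : Set F) = α • (V : Set F)) ↔
      (a0 ^ ((q ^ k - q) / (q - 1)) / a1 ^ ((q ^ k - 1) / (q - 1))) ^ (q ^ i - 1) = 1 := by
  classical
  have hq2 : 2 ≤ q := hq ▸ Fintype.one_lt_card
  set S : Finset F := (V : Set F).toFinite.toFinset with hSdef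
  have hmemS : ∀ x : F, x ∈ S ↔ x ∈ V := by
    intro x; rw [hSdef, Set.Finite.mem_toFinset, SetLike.mem_coe]
  have hcardS : S.card = q ^ k := by
    rw [Set.Finite.card_toFinset]
    have : Fintype.card (V : Set F) = Fintype.card V := by
      apply Fintype.card_congr; rfl
    rw [this, Module.card_eq_pow_finrank (K := Fq), hkV, hq]
  have hmonic : (∏ v ∈ S, (X - C v)).Monic :=
    monic_prod_of_monic _ _ fun v _ => monic_X_sub_C v
  have hPne : (∏ v ∈ S, (X - C v)) ≠ 0 := hmonic.ne_zero
  have hdeg : (∏ v ∈ S, (X - C v)).natDegree = S.card := by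
    rw [natDegree_prod _ _ fun v _ => X_sub_C_ne_zero v]
    simp [natDegree_X_sub_C]
  have hPS : (∏ v ∈ S, (X - C v)) = X ^ q ^ k + C a1 * X ^ q + C a0 * X := hP
  -- k ≥ 2
  have hk2 : 2 ≤ k := by
    by_contra hklt
    push_neg at hklt
    interval_cases k
    · have h1 : (∏ v ∈ S, (X - C v)).coeff q = 0 := by
        apply coeff_eq_zero_of_natDegree_lt
        rw [hdeg, hcardS]; simpa using (show 1 < q by omega)
      rw [hPS, pow_zero, pow_one] at h1
      simp [coeff_X, coeff_X_pow, show ¬(q = 1) by omega,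
        show ¬((1:ℕ) = q) by omega] at h1
      exact ha1 h1
    · have h1 : (∏ v ∈ S, (X - C v)).coeff q = 1 := by
        have := hmonic.coeff_natDegree
        rwa [hdeg, hcardS, pow_one] at this
      rw [hPS, pow_one] at h1
      simp [coeff_X, coeff_X_pow, show ¬((1:ℕ) = q) by omega] at h1
      exact ha1 (by linear_combination h1)
  have hqk : q < q ^ k := by
    calc q = q ^ 1 := (pow_one q).symm
    _ < q ^ k := Nat.pow_lt_pow_right (by omega) (by omega)
  -- a0 ≠ 0
  have ha0 : a0 ≠ 0 := by
    intro h0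
    subst h0
    have hdvd : (X - C (0:F)) ^ 2 ∣ (∏ v ∈ S, (X - C v)) := by
      rw [hPS, C_0]
      obtain ⟨m', hm'⟩ : ∃ m', q ^ k = m' + 2 := ⟨q ^ k - 2, by omega⟩
      obtain ⟨q', hq'⟩ : ∃ q', q = q' + 2 := ⟨q - 2, by omega⟩
      rw [hm', hq']
      exact ⟨X ^ m' + C a1 * X ^ q', by ring⟩
    have h2 : 2 ≤ rootMultiplicity 0 (∏ v ∈ S, (X - C v)) :=
      (le_rootMultiplicity_iff hPne).mpr hdvd
    rw [← count_roots, roots_prod_X_sub_C] at h2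
    have hnd := S.nodup
    rw [Multiset.nodup_iff_count_le_one] at hnd
    exact absurd (le_trans h2 (hnd 0)) (by omega)
  -- membership characterization
  have hmem : ∀ x : F, x ∈ V ↔ x ^ q ^ k + a1 * x ^ q + a0 * x = 0 := by
    intro x
    rw [← hmemS]
    constructor
    · intro hx
      have : eval x (∏ v ∈ S, (X - C v)) = 0 := by
        rw [eval_prod]
        exact Finset.prod_eq_zero hx (by simp)
      rw [hPS] at this
      simpa using this
    · intro hx
      have : eval x (∏ v ∈ S, (X - C v)) = 0 := by rw [hPS]; simpa using hx
      rw [eval_prod, Finset.prod_eq_zero_iff] at this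
      obtain ⟨v, hv, hv0⟩ := this
      simp only [eval_sub, eval_X, eval_C, sub_eq_zero] at hv0
      rwa [hv0]
  -- the Frobenius power map
  obtain ⟨φ, hφ, hφinj, hφsurj⟩ :
      ∃ φ : F →+* F, (∀ x : F, φ x = x ^ q ^ i) ∧
        Function.Injective φ ∧ Function.Surjective φ := by
    obtain ⟨m, hp, hcard⟩ := FiniteField.card Fq (ringChar Fq)
    haveI : CharP F (ringChar Fq) :=
      charP_of_injective_algebraMap (algebraMap Fq F).injective (ringChar Fq)
    haveI : ExpChar F (ringChar Fq) := ExpChar.prime hp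
    refine ⟨iterateFrobenius F (ringChar Fq) (m * i), fun x => ?_,
      (iterateFrobenius F (ringChar Fq) (m * i)).injective,
      Finite.surjective_of_injective (iterateFrobenius F (ringChar Fq) (m * i)).injective⟩
    rw [iterateFrobenius_def, pow_mul, ← hcard, hq]
  have hexp : ∀ x : F, φ (x ^ q ^ k + a1 * x ^ q + a0 * x)
      = (x ^ q ^ i) ^ q ^ k + a1 ^ q ^ i * (x ^ q ^ i) ^ q + a0 ^ q ^ i * (x ^ q ^ i) := by
    intro x
    rw [map_add, map_add, map_mul, map_mul, map_pow, map_pow, hφ, hφ, hφ]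
  -- characterization of the image set
  have hmemA : ∀ y : F, y ∈ (fun x : F => x ^ q ^ i) '' (V : Set F) ↔
      y ^ q ^ k + a1 ^ q ^ i * y ^ q + a0 ^ q ^ i * y = 0 := by
    intro y
    constructor
    · rintro ⟨x, hx, rfl⟩
      have h := (hmem x).mp hx
      have := hexp x
      rw [h, map_zero] at this
      exact this.symm
    · intro hy
      obtain ⟨x, rfl⟩ := hφsurj y
      rw [hφ] at hy
      have : φ (x ^ q ^ k + a1 * x ^ q + a0 * x) = φ 0 := by
        rw [map_zero, hexp]; exact hy
      refine ⟨x, (hmem x).mpr (hφinj this), (hφ x).symm⟩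
  -- characterization of the scaled set
  have hmemB : ∀ α : F, α ≠ 0 → ∀ y : F, y ∈ α • (V : Set F) ↔
      y ^ q ^ k + (a1 * α ^ (q ^ k - q)) * y ^ q + (a0 * α ^ (q ^ k - 1)) * y = 0 := by
    intro α hα y
    have hid : ∀ x : F, (α*x)^(q^k) + (a1 * α^(q^k - q)) * (α*x)^q + (a0 * α^(q^k-1)) * (α*x)
        = α^(q^k) * (x^(q^k) + a1*x^q + a0*x) := by
      intro x
      have e1 : α^(q^k - q) * α^q = α^(q^k) := by rw [← pow_add]; congr 1; omega
      have e2 : α^(q^k - 1) * α = α^(q^k) := by rw [← pow_succ]; congr 1; omega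
      rw [mul_pow, mul_pow]
      linear_combination (a1 * x ^ q) * e1 + (a0 * x) * e2
    rw [Set.mem_smul_set]
    constructor
    · rintro ⟨x, hx, rfl⟩
      rw [smul_eq_mul, hid x, (hmem x).mp hx, mul_zero]
    · intro hy
      refine ⟨α⁻¹ * y, ?_, by rw [smul_eq_mul]; field_simp⟩
      rw [SetLike.mem_coe, hmem]
      have hy' : (α * (α⁻¹ * y)) ^ q ^ k + a1 * α ^ (q ^ k - q) * (α * (α⁻¹ * y)) ^ q
          + a0 * α ^ (q ^ k - 1) * (α * (α⁻¹ * y)) = 0 := by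
        rw [show α * (α⁻¹ * y) = y by field_simp]; exact hy
      rw [hid] at hy'
      exact (mul_eq_zero.mp hy').resolve_left (pow_ne_zero _ hα)
  -- set equality iff coefficient equations
  have hsets : ∀ α : F, α ≠ 0 →
      ((fun x : F => x ^ q ^ i) '' (V : Set F) = α • (V : Set F) ↔
        (a1 ^ q ^ i = a1 * α ^ (q ^ k - q) ∧ a0 ^ q ^ i = a0 * α ^ (q ^ k - 1))) := by
    intro α hα
    constructor
    · intro hEq
      have hpow_inj : Function.Injective (fun x : F => x ^ q ^ i) := by
        intro x y hxy
        apply hφinj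
        rw [hφ, hφ]; exact hxy
      set T : Finset F := S.image (fun x : F => x ^ q ^ i) with hT
      have hcardT : T.card = q ^ k := by
        rw [hT, Finset.card_image_of_injective _ hpow_inj, hcardS]
      set b := a1 ^ q ^ i - a1 * α ^ (q ^ k - q) with hb
      set c := a0 ^ q ^ i - a0 * α ^ (q ^ k - 1) with hc
      set g : F[X] := C b * X ^ q + C c * X with hg
      have heval : ∀ y ∈ T, g.IsRoot y := by
        intro y hy
        rw [hT, Finset.mem_image] at hy
        obtain ⟨x, hxS, rfl⟩ := hy
        have hxV : (x : F) ∈ (V : Set F) := (hmemS x).mp hxS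
        have h1 : (x ^ q ^ i) ^ q ^ k + a1 ^ q ^ i * (x ^ q ^ i) ^ q
            + a0 ^ q ^ i * (x ^ q ^ i) = 0 := (hmemA _).mp ⟨x, hxV, rfl⟩
        have h2 : (x ^ q ^ i) ^ q ^ k + (a1 * α ^ (q ^ k - q)) * (x ^ q ^ i) ^ q
            + (a0 * α ^ (q ^ k - 1)) * (x ^ q ^ i) = 0 := by
          apply (hmemB α hα _).mp
          rw [← hEq]
          exact ⟨x, hxV, rfl⟩
        simp only [IsRoot, hg, eval_add, eval_mul, eval_pow, eval_C, eval_X, hb, hc]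
        linear_combination h1 - h2
      have hg0 : g = 0 := by
        by_contra hgne
        have hsub : T ⊆ g.roots.toFinset := by
          intro y hy
          rw [Multiset.mem_toFinset, mem_roots hgne]
          exact heval y hy
        have hd : g.natDegree ≤ q := by
          refine le_trans (natDegree_add_le _ _) ?_
          simp only [max_le_iff]
          constructor
          · exact le_trans (natDegree_C_mul_le _ _) (by rw [natDegree_X_pow])
          · exact le_trans (natDegree_C_mul_le _ _) (by rw [natDegree_X]; omega)
        have := Finset.card_le_card hsub
        have h2 := (Multiset.toFinset_card_le g.roots).trans
          ((Polynomial.card_roots' g).trans hd)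
        omega
      constructor
      · have : b = 0 := by
          have := congrArg (fun p => Polynomial.coeff p q) hg0
          simp only [hg, coeff_add, coeff_C_mul, coeff_X_pow, coeff_X, coeff_zero,
            if_pos rfl, if_neg (show ¬((1:ℕ) = q) by omega)] at this
          simpa using this
        rw [hb, sub_eq_zero] at this; exact this
      · have : c = 0 := by
          have := congrArg (fun p => Polynomial.coeff p 1) hg0
          simp only [hg, coeff_add, coeff_C_mul, coeff_X_pow, coeff_X, coeff_zero,
            if_neg (show ¬((1:ℕ) = q) by omega), if_pos rfl] at this
          simpa using this
        rw [hc, sub_eq_zero] at this; exact this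
    · rintro ⟨h1, h2⟩
      ext y
      rw [Set.mem_image]
      have := hmemA y
      rw [Set.mem_image] at this
      rw [this, hmemB α hα y, ← h1, ← h2]
  -- arithmetic setup
  have hq1 : 1 ≤ q ^ i := Nat.one_le_pow _ _ (by omega)
  have hdvd1 : (q - 1) ∣ (q ^ k - q) := by
    obtain ⟨c, hc⟩ : (q - 1) ∣ (q ^ (k - 1) - 1) := by
      have h := Nat.sub_dvd_pow_sub_pow q 1 (k - 1)
      rwa [one_pow] at h
    have hpow : q ^ k = q * q ^ (k - 1) := by
      rw [← pow_succ']; congr 1; omega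
    have hone : 1 ≤ q ^ (k - 1) := Nat.one_le_pow _ _ (by omega)
    have h1 : q ^ (k - 1) = (q - 1) * c + 1 := by omega
    refine ⟨q * c, ?_⟩
    have h2 : q * ((q - 1) * c + 1) = (q - 1) * (q * c) + q := by ring
    rw [hpow, h1]
    omega
  have hdvd2 : (q - 1) ∣ (q ^ k - 1) := by
    have h := Nat.sub_dvd_pow_sub_pow q 1 k
    rwa [one_pow] at h
  have hdvd3 : (q - 1) ∣ (q ^ i - 1) := by
    have h := Nat.sub_dvd_pow_sub_pow q 1 i
    rwa [one_pow] at h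
  have hA1 : (q - 1) * ((q ^ k - q) / (q - 1)) = q ^ k - q := Nat.mul_div_cancel' hdvd1
  have hB1 : (q - 1) * ((q ^ k - 1) / (q - 1)) = q ^ k - 1 := Nat.mul_div_cancel' hdvd2
  have hc1 : (q - 1) * ((q ^ i - 1) / (q - 1)) = q ^ i - 1 := Nat.mul_div_cancel' hdvd3
  have hBA : (q ^ k - 1) / (q - 1) = (q ^ k - q) / (q - 1) + 1 := by
    apply Nat.eq_of_mul_eq_mul_left (show 0 < q - 1 by omega)
    rw [hB1, Nat.mul_add, hA1, mul_one]
    omega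
  set A := (q ^ k - q) / (q - 1) with hAdef
  set B := (q ^ k - 1) / (q - 1) with hBdef
  set e := q ^ i - 1 with hedef
  constructor
  · rintro ⟨α, hα, hEq⟩
    obtain ⟨h1, h2⟩ := (hsets α hα).mp hEq
    have e1 : α ^ (q ^ k - q) = a1 ^ e := by
      apply mul_left_cancel₀ ha1
      rw [← h1, ← pow_succ']
      congr 1
      omega
    have e2 : α ^ (q ^ k - 1) = a0 ^ e := by
      apply mul_left_cancel₀ ha0
      rw [← h2, ← pow_succ']
      congr 1
      omega
    have key : a0 ^ (A * e) = a1 ^ (B * e) := by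
      calc a0 ^ (A * e) = (a0 ^ e) ^ A := by rw [← pow_mul, mul_comm]
      _ = (α ^ (q ^ k - 1)) ^ A := by rw [e2]
      _ = α ^ ((q ^ k - 1) * A) := by rw [← pow_mul]
      _ = α ^ ((q ^ k - q) * B) := by
          congr 1
          rw [← hA1, ← hB1]
          ring
      _ = (α ^ (q ^ k - q)) ^ B := by rw [pow_mul]
      _ = (a1 ^ e) ^ B := by rw [e1]
      _ = a1 ^ (B * e) := by rw [← pow_mul, mul_comm]
    rw [div_pow, ← pow_mul, ← pow_mul, key]
    exact div_self (pow_ne_zero _ ha1)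
  · intro h
    rw [div_pow, ← pow_mul, ← pow_mul] at h
    have key : a0 ^ (A * e) = a1 ^ (B * e) :=
      (div_eq_one_iff_eq (pow_ne_zero _ ha1)).mp h
    set α : F := (a0 / a1) ^ ((q ^ i - 1) / (q - 1)) with hαdef
    have hα : α ≠ 0 := pow_ne_zero _ (div_ne_zero ha0 ha1)
    have ha0e : a0 ^ (e * A) = a1 ^ (e * A) * a1 ^ e := by
      rw [← pow_add, mul_comm e A, key]
      congr 1
      rw [hBA]
      ring
    have hs : α ^ (q ^ k - q) = a1 ^ e := by
      have h0 : α ^ (q ^ k - q) = (a0 / a1) ^ (e * A) := by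
        rw [hαdef, ← pow_mul]
        congr 1
        rw [← hc1, ← hA1, hedef]
        ring
      rw [h0, div_pow, ha0e, mul_div_cancel_left₀ _ (pow_ne_zero _ ha1)]
    have ha1e : a0 ^ (e * B) = a0 ^ (e * A) * a0 ^ e := by
      rw [← pow_add]
      congr 1
      rw [hBA]
      ring
    have ht : α ^ (q ^ k - 1) = a0 ^ e := by
      have h0 : α ^ (q ^ k - 1) = (a0 / a1) ^ (e * B) := by
        rw [hαdef, ← pow_mul]
        congr 1
        rw [← hc1, ← hB1, hedef]
        ring
      have h1 : a1 ^ (e * B) = a0 ^ (e * A) := by rw [mul_comm e A, key, mul_comm e B]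
      rw [h0, div_pow, h1, ha1e, mul_div_cancel_left₀ _ (pow_ne_zero _ ha0)]
    refine ⟨α, hα, (hsets α hα).mpr ⟨?_, ?_⟩⟩
    · rw [hs, ← pow_succ']
      congr 1
      omega
    · rw [ht, ← pow_succ']
      congr 1
      omega
end

section
/- Let n be prime and gamma a primitive element of F_{q^n}. Setting alpha_0 = gamma and alpha_1 = gamma^q, the elements alpha_1^{(q^k-1)/(q-1)} and alpha_0^{(q^k-q)/(q-1)} do not lie in the same coset of F_q^* in F_{q^n}^*, i.e., their quotient is not in F_q. -/
theorem stmt12 (q n k : ℕ) (hq : 1 < q) (hn : n.Prime) (hk : 2 ≤ k)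
    (F : Type*) [Field F] [Fintype F] (hF : Fintype.card F = q ^ n)
    (γ : F) (hγ : orderOf γ = q ^ n - 1) :
    ((γ ^ q) ^ ((q ^ k - 1) / (q - 1)) / γ ^ ((q ^ k - q) / (q - 1))) ^ q ≠
      (γ ^ q) ^ ((q ^ k - 1) / (q - 1)) / γ ^ ((q ^ k - q) / (q - 1)) := by
  have hq0 : 0 < q - 1 := by omega
  have hqn : q ^ 2 ≤ q ^ n := Nat.pow_le_pow_right (by omega) hn.two_le
  have hq2 : q + 1 ≤ q ^ 2 := by nlinarith
  have hord : 0 < q ^ n - 1 := by omega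
  have hγ0 : γ ≠ 0 := by
    intro h
    have h1 := pow_orderOf_eq_one γ
    rw [hγ, h, zero_pow (by omega)] at h1
    exact one_ne_zero h1.symm
  -- exact division facts
  have hdvd1 : (q - 1) ∣ q ^ k - 1 := by
    simpa using Nat.sub_dvd_pow_sub_pow q 1 k
  have hdvd2 : (q - 1) ∣ q ^ k - q := by
    obtain ⟨m, rfl⟩ : ∃ m, k = m + 1 := ⟨k - 1, by omega⟩
    have h2 : q ^ (m + 1) - q = q * (q ^ m - 1) := by
      rw [Nat.mul_sub, mul_one, pow_succ']
    rw [h2]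
    have h3 := Nat.sub_dvd_pow_sub_pow q 1 m
    simp only [one_pow] at h3
    exact Dvd.dvd.mul_left h3 q
  set A := (q ^ k - 1) / (q - 1) with hA
  set B := (q ^ k - q) / (q - 1) with hB
  have hA' : (q - 1) * A = q ^ k - 1 := Nat.mul_div_cancel' hdvd1
  have hB' : (q - 1) * B = q ^ k - q := Nat.mul_div_cancel' hdvd2
  have hkey : q * A = B + q ^ k := by
    have hqk : q ≤ q ^ k := Nat.le_self_pow (by omega) q
    have h1 : (q - 1) * (q * A) = (q - 1) * (B + q ^ k) := by
      rw [Nat.mul_add, ← mul_assoc, mul_comm (q-1) q, mul_assoc, hA', hB',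
        Nat.mul_sub, Nat.sub_mul, one_mul, mul_one]
      have h4 : q ^ k ≤ q * q ^ k := Nat.le_mul_of_pos_left _ (by omega)
      omega
    exact Nat.eq_of_mul_eq_mul_left hq0 h1
  have hx : (γ ^ q) ^ A / γ ^ B = γ ^ q ^ k := by
    rw [← pow_mul, hkey, pow_add, mul_comm, mul_div_assoc,
      div_self (pow_ne_zero _ hγ0), mul_one]
  rw [hx, ← pow_mul]
  intro heq
  have hle : q ^ k ≤ q ^ k * q := Nat.le_mul_of_pos_right _ (by omega)
  have hsplit : q ^ k * q = (q ^ k * q - q ^ k) + q ^ k := by omega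
  rw [hsplit, pow_add] at heq
  have hone : γ ^ (q ^ k * q - q ^ k) = 1 := by
    have hne : γ ^ q ^ k ≠ 0 := pow_ne_zero _ hγ0
    field_simp at heq
    exact heq
  have hdvd : (q ^ n - 1) ∣ q ^ k * q - q ^ k := by
    rw [← hγ]
    exact orderOf_dvd_of_pow_eq_one hone
  have heq2 : q ^ k * q - q ^ k = q ^ k * (q - 1) := by
    rw [Nat.mul_sub, mul_one]
  rw [heq2] at hdvd
  have hcop : (q ^ n - 1).Coprime (q ^ k) := by
    apply Nat.Coprime.pow_right
    have h1 : (q ^ n - 1).Coprime (q ^ n) := by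
      have : q ^ n = (q ^ n - 1) + 1 := by omega
      rw [this]
      simp [Nat.coprime_add_self_right]
    exact h1.coprime_dvd_right (dvd_pow_self q hn.pos.ne')
  have hdvd' : (q ^ n - 1) ∣ (q - 1) := hcop.dvd_of_dvd_mul_left hdvd
  have := Nat.le_of_dvd hq0 hdvd'
  omega
end

section
/- Let n be a prime dividing N, and let V be a k-dimensional F_q-subspace of F_{q^N} with P_V(x) = x^{q^k} + alpha_1 x^q + alpha_0 x where alpha_0, alpha_1 in F_{q^n}^* and alpha_1^{(q^k-1)/(q-1)} / alpha_0^{(q^k-q)/(q-1)} is not in F_q. Then the code C = union over i=0..n-1 of {alpha F^i(V) : alpha in F_{q^N}^*} has size n*(q^N - 1)/(q - 1) and any two distinct codewords intersect in a subspace of dimension at most 1. -/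
open Pointwise

open Polynomial

def orbitCodeF (q n : ℕ) {Fq F : Type*} [Field Fq] [Field F] [Algebra Fq F]
    (V : Submodule Fq F) : Set (Submodule Fq F) :=
  {W | ∃ i < n, ∃ α : F, α ≠ 0 ∧
    (W : Set F) = α • ((fun x : F => x ^ q ^ i) '' (V : Set F))}

lemma geomAux (q k : ℕ) (hq : 1 ≤ q) :
    (q - 1) * ∑ t ∈ Finset.range k, q ^ t = q ^ k - 1 := by
  induction k with
  | zero => simp
  | succ k ih =>
    rw [Finset.sum_range_succ, Nat.mul_add, ih]
    have h1 : 1 ≤ q ^ k := Nat.one_le_pow _ _ hq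
    have h2 : q ^ k ≤ q ^ (k+1) := Nat.pow_le_pow_right hq (by omega)
    have h3 : (q - 1) * q ^ k = q ^ (k+1) - q ^ k := by
      rw [Nat.sub_mul, one_mul, pow_succ, Nat.mul_comm]
    rw [h3]; omega

lemma gcdMem (L : Set ℕ) (h0 : 0 ∈ L)
    (hadd : ∀ a b, a ∈ L → b ∈ L → a + b ∈ L)
    (hcancel : ∀ a b, a + b ∈ L → b ∈ L → a ∈ L) :
    ∀ m n, m ∈ L → n ∈ L → Nat.gcd m n ∈ L := by
  have hmul : ∀ c m, m ∈ L → c * m ∈ L := by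
    intro c m hm
    induction c with
    | zero => simpa
    | succ c ih => rw [Nat.succ_mul]; exact hadd _ _ ih hm
  intro m
  induction m using Nat.strong_induction_on with
  | _ m ih =>
    intro n hm hn
    rcases Nat.eq_zero_or_pos m with rfl | hmpos
    · simpa
    · rw [Nat.gcd_rec]
      have hmod : n % m ∈ L := by
        refine hcancel _ _ ?_ (hmul (n / m) m hm)
        rw [Nat.add_comm, Nat.mul_comm (n / m) m, Nat.div_add_mod n m]
        exact hn
      exact ih (n % m) (Nat.mod_lt _ hmpos) _ hmod hm




def triSubmodule {Fq F : Type*} [Field Fq] [Field F] [Algebra Fq F] (q k : ℕ) (c1 c0 : F)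
    (h1 : ∀ (j : ℕ) (x y : F), (x + y) ^ q ^ j = x ^ q ^ j + y ^ q ^ j)
    (h2 : ∀ (j : ℕ) (c : Fq), algebraMap Fq F c ^ q ^ j = algebraMap Fq F c)
    (hq1 : 1 ≤ q) : Submodule Fq F where
  carrier := {x : F | x ^ q ^ k + c1 * x ^ q + c0 * x = 0}
  add_mem' := by
    intro a b ha hb
    simp only [Set.mem_setOf_eq] at *
    have e1 : (a + b) ^ q ^ k = a ^ q ^ k + b ^ q ^ k := h1 k a b
    have e2 : (a + b) ^ q = a ^ q + b ^ q := by
      have := h1 1 a b; rwa [pow_one] at this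
    rw [e1, e2]
    linear_combination ha + hb
  zero_mem' := by
    have h0 : (0 : F) ^ q ^ k = 0 := zero_pow (by positivity)
    have h0' : (0 : F) ^ q = 0 := zero_pow (by omega)
    simp [h0, h0']
  smul_mem' := by
    intro c x hx
    simp only [Set.mem_setOf_eq] at *
    rw [Algebra.smul_def]
    have e1 : ((algebraMap Fq F) c * x) ^ q ^ k = (algebraMap Fq F) c * x ^ q ^ k := by
      rw [mul_pow, h2 k c]
    have e2 : ((algebraMap Fq F) c * x) ^ q = (algebraMap Fq F) c * x ^ q := by
      have := h2 1 c; rw [pow_one] at this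
      rw [mul_pow, this]
    rw [e1, e2]
    linear_combination (algebraMap Fq F c) * hx

theorem mem_triSubmodule {Fq F : Type*} [Field Fq] [Field F] [Algebra Fq F] (q k : ℕ) (c1 c0 : F)
    (h1 : ∀ (j : ℕ) (x y : F), (x + y) ^ q ^ j = x ^ q ^ j + y ^ q ^ j)
    (h2 : ∀ (j : ℕ) (c : Fq), algebraMap Fq F c ^ q ^ j = algebraMap Fq F c)
    (hq1 : 1 ≤ q) (x : F) :
    x ∈ triSubmodule q k c1 c0 h1 h2 hq1 ↔ x ^ q ^ k + c1 * x ^ q + c0 * x = 0 := Iff.rfl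

set_option maxHeartbeats 1600000 in
theorem stmt13 (q n N k : ℕ) (hn : n.Prime) (hnN : n ∣ N)
    (Fq F : Type*) [Field Fq] [Fintype Fq] [Field F] [Fintype F] [Algebra Fq F]
    (hq : Fintype.card Fq = q) (hN : Module.finrank Fq F = N)
    (V : Submodule Fq F) (hkV : Module.finrank Fq V = k)
    (a0 a1 : F) (ha0 : a0 ≠ 0) (ha1 : a1 ≠ 0)
    (ha0n : a0 ^ q ^ n = a0) (ha1n : a1 ^ q ^ n = a1)
    (hneq : (a1 ^ ((q ^ k - 1) / (q - 1)) / a0 ^ ((q ^ k - q) / (q - 1))) ^ q ≠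
            a1 ^ ((q ^ k - 1) / (q - 1)) / a0 ^ ((q ^ k - q) / (q - 1)))
    (hP : subspacePoly (V : Set F) = X ^ q ^ k + C a1 * X ^ q + C a0 * X) :
    Set.ncard (orbitCodeF q n V) = n * ((q ^ N - 1) / (q - 1)) ∧
    ∀ U ∈ orbitCodeF q n V, ∀ W ∈ orbitCodeF q n V,
      U ≠ W → Module.finrank Fq ↥(U ⊓ W) ≤ 1 := by
  -- basic numerics
  have hq2 : 2 ≤ q := hq ▸ Fintype.one_lt_card
  -- characteristic
  set p := ringChar Fq with hpdef
  haveI : CharP Fq p := ringChar.charP Fq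
  have hp : p.Prime := CharP.char_is_prime Fq p
  haveI : CharP F p := charP_of_injective_algebraMap (algebraMap Fq F).injective p
  haveI : Fact p.Prime := ⟨hp⟩
  haveI : ExpChar F p := ExpChar.prime hp
  obtain ⟨m, -, hqm⟩ := FiniteField.card Fq p
  rw [hq] at hqm
  -- Frobenius facts
  have hqj : ∀ j : ℕ, q ^ j = p ^ (m * j) := by
    intro j; rw [hqm, ← pow_mul]
  have hfrobadd : ∀ (j : ℕ) (x y : F), (x + y) ^ q ^ j = x ^ q ^ j + y ^ q ^ j := by
    intro j x y; rw [hqj]; exact add_pow_char_pow x y p (m*j)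
  have hfrobinj : ∀ j : ℕ, Function.Injective fun x : F => x ^ q ^ j := by
    intro j
    have : (fun x : F => x ^ q ^ j) = (frobenius F p)^[m * j] := by
      funext x; rw [iterate_frobenius, hqj]
    rw [this]
    exact Function.Injective.iterate (frobenius_inj F p) _
  have hfrobsurj : ∀ j : ℕ, Function.Surjective fun x : F => x ^ q ^ j := fun j =>
    Finite.surjective_of_injective (hfrobinj j)
  have halgpow : ∀ c : Fq, algebraMap Fq F c ^ q = algebraMap Fq F c := by
    intro c
    rw [← map_pow]
    congr 1
    rw [← hq]
    exact FiniteField.pow_card c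

  -- membership in V iff trinomial vanishes
  have hVfin : (V : Set F).Finite := Set.toFinite _
  have hVmem : ∀ v : F, v ∈ V ↔ v ^ q ^ k + a1 * v ^ q + a0 * v = 0 := by
    intro v
    have h := congrArg (Polynomial.eval v) hP
    simp only [subspacePoly, eval_prod, eval_add, eval_mul, eval_pow, eval_X, eval_C] at h
    rw [← h]
    rw [Finset.prod_eq_zero_iff]
    constructor
    · intro hv
      exact ⟨v, by simpa using hv, by simp [eval_sub]⟩
    · rintro ⟨w, hw, hw0⟩
      simp only [eval_sub, eval_X, eval_C, sub_eq_zero] at hw0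
      subst hw0
      simpa using hw
  -- cardinality of V
  have hcardV : Nat.card (V : Set F) = q ^ k := by
    have e : ↥(V : Set F) ≃ ↥V := Equiv.subtypeEquivRight fun x => Iff.rfl
    rw [Nat.card_congr e]
    letI : Fintype V := Fintype.ofFinite V
    rw [Nat.card_eq_fintype_card]
    rw [Module.card_eq_pow_finrank (K := Fq) (V := V), hq, hkV]
  -- k is at least 2
  have hmonic : (subspacePoly (V : Set F)).Monic :=
    monic_prod_of_monic _ _ (fun v _ => monic_X_sub_C v)
  have hdeg : (subspacePoly (V : Set F)).natDegree = q ^ k := by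
    rw [subspacePoly, natDegree_prod _ _ (fun v _ => X_sub_C_ne_zero v)]
    simp only [natDegree_X_sub_C, Finset.sum_const, smul_eq_mul, mul_one]
    rw [← hcardV, Nat.card_eq_card_finite_toFinset]
  have hk2 : 2 ≤ k := by
    by_contra hklt
    push_neg at hklt
    interval_cases k
    · -- k = 0 : degrees mismatch
      have h1 : (subspacePoly (V : Set F)).natDegree = 1 := by rw [hdeg]; simp
      have h2 : (X ^ q ^ 0 + C a1 * X ^ q + C a0 * X : F[X]).coeff q = 0 := by
        rw [← hP]
        apply coeff_eq_zero_of_natDegree_lt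
        rw [h1]; omega
      have hq1 : ¬ ((1:ℕ) = q) := by omega
      have hq1' : ¬ (q = 1) := by omega
      simp [coeff_X_pow, coeff_X, hq1, hq1'] at h2
      exact ha1 h2
    · -- k = 1 : coefficient at q gives 1 + a1 = 1
      have h1 : (subspacePoly (V : Set F)).coeff q = 1 := by
        have := hmonic.coeff_natDegree
        rwa [hdeg, pow_one] at this
      rw [hP] at h1
      have hq1 : ¬ ((1:ℕ) = q) := by omega
      have hq1' : ¬ (q = 1) := by omega
      simp [coeff_X_pow, coeff_X, hq1, hq1'] at h1
      exact ha1 (by linear_combination h1)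

  -- iterated fixedness of Fq elements
  have halgpowj : ∀ (j : ℕ) (c : Fq), algebraMap Fq F c ^ q ^ j = algebraMap Fq F c := by
    intro j c
    induction j with
    | zero => simp
    | succ j ih => rw [pow_succ, pow_mul, ih, halgpow]
  have hsum3 : ∀ (j : ℕ) (x y z : F), (x + y + z) ^ q ^ j = x ^ q ^ j + y ^ q ^ j + z ^ q ^ j := by
    intro j x y z; rw [hfrobadd, hfrobadd]
  have hqle : q ≤ q ^ k := Nat.le_self_pow (by omega) q
  have h1le : 1 ≤ q ^ k := Nat.one_le_pow _ _ (by omega)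
  -- key: description of codeword carriers as solution sets of trinomials
  have keyM : ∀ (i : ℕ) (α : F), α ≠ 0 →
      α • ((fun x : F => x ^ q ^ i) '' (V : Set F)) =
      {x : F | x ^ q ^ k + (α ^ (q ^ k - q) * a1 ^ q ^ i) * x ^ q
        + (α ^ (q ^ k - 1) * a0 ^ q ^ i) * x = 0} := by
    intro i α hα
    have e1 : α ^ (q ^ k - q) * α ^ q = α ^ q ^ k := pow_sub_mul_pow α hqle
    have e2 : α ^ (q ^ k - 1) * α ^ 1 = α ^ q ^ k := pow_sub_mul_pow α h1le
    rw [pow_one] at e2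
    have hiden : ∀ v : F, (α * v ^ q ^ i) ^ q ^ k
        + (α ^ (q ^ k - q) * a1 ^ q ^ i) * (α * v ^ q ^ i) ^ q
        + (α ^ (q ^ k - 1) * a0 ^ q ^ i) * (α * v ^ q ^ i)
        = α ^ q ^ k * ((v ^ q ^ k + a1 * v ^ q + a0 * v) ^ q ^ i) := by
      intro v
      rw [mul_pow α (v ^ q ^ i) (q ^ k), mul_pow α (v ^ q ^ i) q,
        ← pow_mul v (q ^ i) (q ^ k), ← pow_mul v (q ^ i) q,
        hsum3 i (v ^ q ^ k) (a1 * v ^ q) (a0 * v), mul_pow a1, mul_pow a0,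
        ← pow_mul v (q ^ k) (q ^ i), ← pow_mul v q (q ^ i),
        Nat.mul_comm (q ^ k) (q ^ i), Nat.mul_comm q (q ^ i)]
      linear_combination (a1 ^ q ^ i * v ^ (q ^ i * q)) * e1 + (a0 ^ q ^ i * v ^ q ^ i) * e2
    ext x
    simp only [Set.mem_smul_set, Set.mem_image, Set.mem_setOf_eq]
    constructor
    · rintro ⟨y, ⟨v, hv, rfl⟩, rfl⟩
      rw [smul_eq_mul, hiden v, (hVmem v).mp hv, zero_pow (by positivity), mul_zero]
    · intro hx
      obtain ⟨v, hv⟩ := hfrobsurj i (x / α)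
      simp only at hv
      have hxv : x = α * v ^ q ^ i := by
        rw [hv]; field_simp
      have h0 : α ^ q ^ k * ((v ^ q ^ k + a1 * v ^ q + a0 * v) ^ q ^ i) = 0 := by
        rw [← hiden v, ← hxv]; exact hx
      have h0' : (v ^ q ^ k + a1 * v ^ q + a0 * v) ^ q ^ i = 0 := by
        have := mul_eq_zero.mp h0
        rcases this with h | h
        · exact absurd h (pow_ne_zero _ hα)
        · exact h
      have hvV : v ∈ V := (hVmem v).mpr (pow_eq_zero_iff (by positivity) |>.mp h0')
      exact ⟨v ^ q ^ i, ⟨v, hvV, rfl⟩, by rw [smul_eq_mul, hxv]⟩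

  -- cardinality of codeword sets
  have himg : ∀ (α : F) (s : Set F), α • s = (fun y => α * y) '' s := by
    intro α s; ext x; simp [Set.mem_smul_set, smul_eq_mul]
  have hsetcard : ∀ (i : ℕ) (α : F), α ≠ 0 →
      (α • ((fun x : F => x ^ q ^ i) '' (V : Set F))).ncard = q ^ k := by
    intro i α hα
    rw [himg, Set.ncard_image_of_injective _ (mul_right_injective₀ hα),
      Set.ncard_image_of_injective _ (hfrobinj i), ← Nat.card_coe_set_eq, hcardV]
  -- small root sets
  have hsol_small : ∀ c1 c0 : F, (c1 ≠ 0 ∨ c0 ≠ 0) →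
      ({x : F | c1 * x ^ q + c0 * x = 0}).ncard ≤ q := by
    intro c1 c0 hc
    classical
    set g : F[X] := C c1 * X ^ q + C c0 * X with hg
    have hq1 : ¬ (q = 1) := by omega
    have hq1' : ¬ ((1:ℕ) = q) := by omega
    have hgne : g ≠ 0 := by
      intro h
      rcases hc with hc1 | hc0
      · have : g.coeff q = c1 := by
          simp [hg, coeff_X_pow, coeff_X, hq1, hq1']
        rw [h] at this; simp at this; exact hc1 this.symm
      · have : g.coeff 1 = c0 := by
          simp [hg, coeff_X_pow, coeff_X, hq1, hq1']
        rw [h] at this; simp at this; exact hc0 this.symm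
    have hsub : {x : F | c1 * x ^ q + c0 * x = 0} ⊆ (g.roots.toFinset : Set F) := by
      intro x hx
      simp only [Set.mem_setOf_eq] at hx
      rw [Finset.mem_coe, Multiset.mem_toFinset, mem_roots hgne]
      simp only [IsRoot.def, hg, eval_add, eval_mul, eval_pow, eval_X, eval_C]
      exact hx
    calc ({x : F | c1 * x ^ q + c0 * x = 0}).ncard
        ≤ (g.roots.toFinset : Set F).ncard := Set.ncard_le_ncard hsub (Set.toFinite _)
      _ = g.roots.toFinset.card := by rw [Set.ncard_coe_finset]
      _ ≤ Multiset.card g.roots := Multiset.toFinset_card_le _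
      _ ≤ g.natDegree := Polynomial.card_roots' g
      _ ≤ q := by
          apply le_trans (Polynomial.natDegree_add_le _ _)
          simp only [max_le_iff]
          constructor
          · exact le_trans (natDegree_C_mul_le _ _) (le_of_eq (natDegree_X_pow q))
          · exact le_trans (natDegree_C_mul_le _ _) (by rw [natDegree_X]; omega)
  -- extraction of coefficients from large solution sets
  have hextract : ∀ (S : Set F), S.ncard = q ^ k → ∀ c1 c0 d1 d0 : F,
      (∀ x ∈ S, x ^ q ^ k + c1 * x ^ q + c0 * x = 0) →
      (∀ x ∈ S, x ^ q ^ k + d1 * x ^ q + d0 * x = 0) → c1 = d1 ∧ c0 = d0 := by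
    intro S hS c1 c0 d1 d0 h1 h2
    by_contra hne
    have hc : c1 - d1 ≠ 0 ∨ c0 - d0 ≠ 0 := by
      by_contra h
      push_neg at h
      obtain ⟨e1, e2⟩ := h
      exact hne ⟨sub_eq_zero.mp e1, sub_eq_zero.mp e2⟩
    have hsub : S ⊆ {x : F | (c1 - d1) * x ^ q + (c0 - d0) * x = 0} := by
      intro x hx
      simp only [Set.mem_setOf_eq]
      linear_combination (h1 x hx) - (h2 x hx)
    have hle1 : q ^ k ≤ q := by
      rw [← hS]
      exact le_trans (Set.ncard_le_ncard hsub (Set.toFinite _)) (hsol_small _ _ hc)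
    have hle2 : q ^ 2 ≤ q ^ k := Nat.pow_le_pow_right (by omega) hk2
    have hle3 : q < q ^ 2 := by nlinarith
    omega
  -- equal codeword sets have equal coefficient pairs
  have hpairext : ∀ (i : ℕ) (α : F), α ≠ 0 → ∀ (j : ℕ) (β : F), β ≠ 0 →
      α • ((fun x : F => x ^ q ^ i) '' (V : Set F)) =
        β • ((fun x : F => x ^ q ^ j) '' (V : Set F)) →
      α ^ (q ^ k - q) * a1 ^ q ^ i = β ^ (q ^ k - q) * a1 ^ q ^ j ∧
      α ^ (q ^ k - 1) * a0 ^ q ^ i = β ^ (q ^ k - 1) * a0 ^ q ^ j := by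
    intro i α hα j β hβ hEq
    apply hextract _ (hsetcard i α hα)
    · intro x hx
      rw [keyM i α hα] at hx
      exact hx
    · intro x hx
      rw [hEq, keyM j β hβ] at hx
      exact hx

  -- geometric sums
  set E1 : ℕ := ∑ t ∈ Finset.range k, q ^ t with hE1def
  set E0 : ℕ := q * ∑ t ∈ Finset.range (k-1), q ^ t with hE0def
  have hgE1 : (q - 1) * E1 = q ^ k - 1 := geomAux q k (by omega)
  have hgE0 : (q - 1) * E0 = q ^ k - q := by
    rw [hE0def, ← Nat.mul_assoc, Nat.mul_comm (q-1) q, Nat.mul_assoc,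
      geomAux q (k-1) (by omega), Nat.mul_sub, Nat.mul_one, ← pow_succ']
    congr 2
    omega
  have hE1div : (q ^ k - 1) / (q - 1) = E1 := by
    rw [← hgE1]; exact Nat.mul_div_cancel_left _ (by omega)
  have hE0div : (q ^ k - q) / (q - 1) = E0 := by
    rw [← hgE0]; exact Nat.mul_div_cancel_left _ (by omega)
  rw [hE1div, hE0div] at hneq
  set r : F := a1 ^ E1 / a0 ^ E0 with hrdef
  have hrne : r ≠ 0 := div_ne_zero (pow_ne_zero _ ha1) (pow_ne_zero _ ha0)
  -- the set of exponents fixing r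
  set L : Set ℕ := {l : ℕ | r ^ q ^ l = r} with hLdef
  have h0L : 0 ∈ L := by simp [hLdef]
  have hiterpow : ∀ (a b : ℕ) (x : F), x ^ q ^ (a + b) = (x ^ q ^ a) ^ q ^ b := by
    intro a b x
    rw [pow_add, pow_mul]
  have haddL : ∀ a b, a ∈ L → b ∈ L → a + b ∈ L := by
    intro a b ha hb
    simp only [hLdef, Set.mem_setOf_eq] at *
    rw [hiterpow, ha, hb]
  have hcancelL : ∀ a b, a + b ∈ L → b ∈ L → a ∈ L := by
    intro a b hab hb
    simp only [hLdef, Set.mem_setOf_eq] at *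
    apply hfrobinj b
    simp only
    rw [← hiterpow, hab, hb]
  have hnL : n ∈ L := by
    simp only [hLdef, Set.mem_setOf_eq, hrdef]
    rw [div_pow, pow_right_comm a1, pow_right_comm a0, ha1n, ha0n]
  -- equal coefficient pairs force equal Frobenius indices
  have hijaux : ∀ i j : ℕ, i ≤ j → j < n → (∃ α β : F, α ≠ 0 ∧ β ≠ 0 ∧
      α ^ (q ^ k - q) * a1 ^ q ^ i = β ^ (q ^ k - q) * a1 ^ q ^ j ∧
      α ^ (q ^ k - 1) * a0 ^ q ^ i = β ^ (q ^ k - 1) * a0 ^ q ^ j) → i = j := by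
    intro i j hle hjn ⟨α, β, hα, hβ, heq1, heq2⟩
    by_contra hne
    -- raise the equations to suitable powers and divide
    have hexp : (q ^ k - q) * E1 = (q ^ k - 1) * E0 := by
      rw [← hgE1, ← hgE0]; ring
    have cEq1 : α ^ ((q ^ k - q) * E1) * a1 ^ (q ^ i * E1)
        = β ^ ((q ^ k - q) * E1) * a1 ^ (q ^ j * E1) := by
      have := congrArg (fun z : F => z ^ E1) heq1
      simpa only [mul_pow, ← pow_mul] using this
    have cEq2 : α ^ ((q ^ k - q) * E1) * a0 ^ (q ^ i * E0)
        = β ^ ((q ^ k - q) * E1) * a0 ^ (q ^ j * E0) := by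
      have := congrArg (fun z : F => z ^ E0) heq2
      simpa only [mul_pow, ← pow_mul, ← hexp] using this
    have hcross : a1 ^ (q ^ i * E1) * a0 ^ (q ^ j * E0)
        = a1 ^ (q ^ j * E1) * a0 ^ (q ^ i * E0) := by
      have hαM : α ^ ((q ^ k - q) * E1) ≠ 0 := pow_ne_zero _ hα
      apply mul_left_cancel₀ hαM
      calc α ^ ((q ^ k - q) * E1) * (a1 ^ (q ^ i * E1) * a0 ^ (q ^ j * E0))
          = (α ^ ((q ^ k - q) * E1) * a1 ^ (q ^ i * E1)) * a0 ^ (q ^ j * E0) := by ring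
        _ = (β ^ ((q ^ k - q) * E1) * a1 ^ (q ^ j * E1)) * a0 ^ (q ^ j * E0) := by rw [cEq1]
        _ = (β ^ ((q ^ k - q) * E1) * a0 ^ (q ^ j * E0)) * a1 ^ (q ^ j * E1) := by ring
        _ = (α ^ ((q ^ k - q) * E1) * a0 ^ (q ^ i * E0)) * a1 ^ (q ^ j * E1) := by rw [← cEq2]
        _ = α ^ ((q ^ k - q) * E1) * (a1 ^ (q ^ j * E1) * a0 ^ (q ^ i * E0)) := by ring
    have hrij : r ^ q ^ i = r ^ q ^ j := by
      rw [hrdef, div_pow, div_pow, div_eq_div_iff (pow_ne_zero _ (pow_ne_zero _ ha0))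
        (pow_ne_zero _ (pow_ne_zero _ ha0))]
      rw [← pow_mul a1 E1 (q ^ i), ← pow_mul a1 E1 (q ^ j),
        ← pow_mul a0 E0 (q ^ i), ← pow_mul a0 E0 (q ^ j),
        Nat.mul_comm E1 (q ^ i), Nat.mul_comm E1 (q ^ j),
        Nat.mul_comm E0 (q ^ i), Nat.mul_comm E0 (q ^ j)]
      exact hcross
    have hmL : (j - i) ∈ L := by
      simp only [hLdef, Set.mem_setOf_eq]
      apply hfrobinj i
      simp only
      rw [← hiterpow (j - i) i r, Nat.sub_add_cancel hle, ← hrij]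
    have hgcd : Nat.gcd (j - i) n = 1 := by
      have h1 : 0 < j - i := by omega
      have h2 : ¬ (n ∣ (j - i)) := by
        intro hdvd
        have := Nat.le_of_dvd h1 hdvd
        omega
      have := (Nat.Prime.coprime_iff_not_dvd hn).mpr h2
      rw [Nat.coprime_comm] at this
      exact this
    have h1L : 1 ∈ L := by
      rw [← hgcd]
      exact gcdMem L h0L haddL hcancelL _ _ hmL hnL
    simp only [hLdef, Set.mem_setOf_eq, pow_one] at h1L
    exact hneq h1L
  have hij : ∀ i j : ℕ, i < n → j < n → (∃ α β : F, α ≠ 0 ∧ β ≠ 0 ∧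
      α ^ (q ^ k - q) * a1 ^ q ^ i = β ^ (q ^ k - q) * a1 ^ q ^ j ∧
      α ^ (q ^ k - 1) * a0 ^ q ^ i = β ^ (q ^ k - 1) * a0 ^ q ^ j) → i = j := by
    intro i j hi hj hex
    rcases le_total i j with h | h
    · exact hijaux i j h hj hex
    · obtain ⟨α, β, hα, hβ, he1, he2⟩ := hex
      exact (hijaux j i h hi ⟨β, α, hβ, hα, he1.symm, he2.symm⟩).symm

  -- the subgroup K of (q-1)-th roots of unity in Fˣ
  classical
  set K : Subgroup Fˣ := MonoidHom.ker (powMonoidHom (q-1) : Fˣ →* Fˣ) with hKdef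
  have hKmem : ∀ u : Fˣ, u ∈ K ↔ (u : F) ^ (q - 1) = 1 := by
    intro u
    rw [hKdef, MonoidHom.mem_ker, powMonoidHom_apply]
    constructor
    · intro h
      have := congrArg (Units.val) h
      simpa using this
    · intro h
      apply Units.ext
      simpa using h
  -- fixed points of the q-power map are exactly the image of Fq
  have hfixImage : ∀ x : F, x ^ q = x → ∃ c : Fq, algebraMap Fq F c = x := by
    intro x hx
    set φ : Fq ↪ F := ⟨algebraMap Fq F, (algebraMap Fq F).injective⟩ with hφdef
    set img : Finset F := Finset.univ.map φ with himgdef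
    set fix : Finset F := Finset.univ.filter (fun y : F => y ^ q = y) with hfixdef
    have hsub : img ⊆ fix := by
      intro y hy
      simp only [himgdef, Finset.mem_map, Finset.mem_univ, true_and, hφdef,
        Function.Embedding.coeFn_mk] at hy
      obtain ⟨c, hc⟩ := hy
      simp only [hfixdef, Finset.mem_filter, Finset.mem_univ, true_and]
      rw [← hc, halgpow]
    have hcardimg : img.card = q := by
      rw [himgdef, Finset.card_map, Finset.card_univ, hq]
    have hcardfix : fix.card ≤ q := by
      set g : F[X] := X ^ q - X with hgdef
      have hq1 : ¬ ((q:ℕ) = 1) := by omega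
      have hq1' : ¬ ((1:ℕ) = q) := by omega
      have hgne : g ≠ 0 := by
        intro h
        have hcf : g.coeff q = 1 := by
          simp [hgdef, coeff_X_pow, coeff_X, hq1, hq1']
        rw [h] at hcf
        simp at hcf
      have hsub2 : fix ⊆ g.roots.toFinset := by
        intro y hy
        simp only [hfixdef, Finset.mem_filter, Finset.mem_univ, true_and] at hy
        rw [Multiset.mem_toFinset, mem_roots hgne]
        simp only [IsRoot.def, hgdef, eval_sub,
          eval_pow, eval_X]
        rw [hy, sub_self]
      calc fix.card ≤ g.roots.toFinset.card := Finset.card_le_card hsub2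
        _ ≤ Multiset.card g.roots := Multiset.toFinset_card_le _
        _ ≤ g.natDegree := Polynomial.card_roots' g
        _ ≤ q := by
            rw [hgdef]
            apply le_trans (Polynomial.natDegree_sub_le _ _)
            simp [natDegree_X_pow, natDegree_X]
            omega
    have heq : img = fix := Finset.eq_of_subset_of_card_le hsub (by omega)
    have hxfix : x ∈ fix := by
      simp only [hfixdef, Finset.mem_filter, Finset.mem_univ, true_and]
      exact hx
    rw [← heq] at hxfix
    simp only [himgdef, Finset.mem_map, Finset.mem_univ, true_and, hφdef,
      Function.Embedding.coeFn_mk] at hxfix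
    exact hxfix
  -- cardinality of K
  have hcardK : Nat.card K = q - 1 := by
    set ι : Fqˣ →* Fˣ := Units.map (algebraMap Fq F).toMonoidHom with hιdef
    have hιinj : Function.Injective ι := by
      intro u v h
      apply Units.ext
      apply (algebraMap Fq F).injective
      exact congrArg Units.val h
    have hrange : ι.range = K := by
      ext u
      rw [hKmem]
      constructor
      · rintro ⟨c, rfl⟩
        have hc : (c : Fq) ^ (q - 1) = 1 := by
          rw [← hq]
          exact FiniteField.pow_card_sub_one_eq_one (c : Fq) c.ne_zero
        show ((ι c : Fˣ) : F) ^ (q-1) = 1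
        rw [hιdef]
        simp only [Units.coe_map, RingHom.toMonoidHom_eq_coe, MonoidHom.coe_coe]
        rw [← map_pow, hc, map_one]
      · intro h
        have hfix : ((u : F)) ^ q = u := by
          have hq' : q = (q - 1) + 1 := by omega
          rw [hq', pow_succ, h, one_mul]
        obtain ⟨c, hc⟩ := hfixImage _ hfix
        have hcne : c ≠ 0 := by
          intro h0
          rw [h0, map_zero] at hc
          exact u.ne_zero hc.symm
        refine ⟨Units.mk0 c hcne, ?_⟩
        apply Units.ext
        simpa [hιdef] using hc
    have : Nat.card Fqˣ = Nat.card K := by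
      rw [← hrange]
      exact Nat.card_congr (MonoidHom.ofInjective hιinj).toEquiv
    rw [← this, Nat.card_eq_fintype_card, Fintype.card_units, hq]
  -- cardinality of the quotient
  have hcardU : Nat.card Fˣ = q ^ N - 1 := by
    rw [Nat.card_eq_fintype_card, Fintype.card_units,
      Module.card_eq_pow_finrank (K := Fq) (V := F), hq, hN]
  have hQt : Nat.card (Fˣ ⧸ K) = (q ^ N - 1) / (q - 1) := by
    have h := Subgroup.card_eq_card_quotient_mul_card_subgroup K
    rw [hcardU, hcardK] at h
    rw [h, Nat.mul_div_cancel _ (by omega : 0 < q - 1)]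

  -- the codeword submodules
  set Θ : ℕ → Fˣ → Submodule Fq F := fun i u =>
    triSubmodule q k ((u : F) ^ (q ^ k - q) * a1 ^ q ^ i) ((u : F) ^ (q ^ k - 1) * a0 ^ q ^ i)
      hfrobadd halgpowj (by omega) with hΘdef
  have hΘmem : ∀ (i : ℕ) (u : Fˣ) (x : F), x ∈ Θ i u ↔
      x ^ q ^ k + ((u : F) ^ (q ^ k - q) * a1 ^ q ^ i) * x ^ q
        + ((u : F) ^ (q ^ k - 1) * a0 ^ q ^ i) * x = 0 := by
    intro i u x
    rw [hΘdef]
    exact mem_triSubmodule _ _ _ _ _ _ _ _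
  have hΘcarrier : ∀ (i : ℕ) (u : Fˣ),
      (Θ i u : Set F) = (u : F) • ((fun x : F => x ^ q ^ i) '' (V : Set F)) := by
    intro i u
    rw [keyM i (u : F) u.ne_zero]
    ext x
    simp only [SetLike.mem_coe, hΘmem, Set.mem_setOf_eq]
  have horb : ∀ W : Submodule Fq F, W ∈ orbitCodeF q n V ↔ ∃ i, i < n ∧ ∃ u : Fˣ, W = Θ i u := by
    intro W
    constructor
    · rintro ⟨i, hi, α, hα, hset⟩
      refine ⟨i, hi, Units.mk0 α hα, ?_⟩
      apply SetLike.coe_injective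
      rw [hΘcarrier i (Units.mk0 α hα)]
      exact hset
    · rintro ⟨i, hi, u, rfl⟩
      exact ⟨i, hi, (u : F), u.ne_zero, hΘcarrier i u⟩
  have hsplitexp : q ^ k - 1 = (q ^ k - q) + (q - 1) := by omega
  have hΘcongr : ∀ (i : ℕ) (u v : Fˣ), u⁻¹ * v ∈ K → Θ i u = Θ i v := by
    intro i u v huv
    rw [hKmem] at huv
    have hval : (v : F) = (u : F) * ((u⁻¹ * v : Fˣ) : F) := by
      rw [Units.val_mul]
      field_simp
      exact (Units.mul_inv u).symm
    have h1 : (v : F) ^ (q ^ k - q) = (u : F) ^ (q ^ k - q) := by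
      have hγ : ((u⁻¹ * v : Fˣ) : F) ^ (q ^ k - q) = 1 := by
        rw [← hgE0, pow_mul, huv, one_pow]
      rw [hval, mul_pow, hγ, mul_one]
    have h0 : (v : F) ^ (q ^ k - 1) = (u : F) ^ (q ^ k - 1) := by
      have hγ : ((u⁻¹ * v : Fˣ) : F) ^ (q ^ k - 1) = 1 := by
        rw [← hgE1, pow_mul, huv, one_pow]
      rw [hval, mul_pow, hγ, mul_one]
    apply SetLike.ext
    intro x
    rw [hΘmem, hΘmem, h1, h0]
  have hΘinj : ∀ i j : ℕ, i < n → j < n → ∀ u v : Fˣ, Θ i u = Θ j v → i = j ∧ u⁻¹ * v ∈ K := by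
    intro i j hi hj u v hEq
    have hsets : (u : F) • ((fun x : F => x ^ q ^ i) '' (V : Set F))
        = (v : F) • ((fun x : F => x ^ q ^ j) '' (V : Set F)) := by
      rw [← hΘcarrier i u, ← hΘcarrier j v, hEq]
    obtain ⟨he1, he2⟩ := hpairext i (u : F) u.ne_zero j (v : F) v.ne_zero hsets
    have hijeq : i = j := hij i j hi hj ⟨(u : F), (v : F), u.ne_zero, v.ne_zero, he1, he2⟩
    subst hijeq
    have hu1 : (u : F) ^ (q ^ k - q) = (v : F) ^ (q ^ k - q) :=
      mul_right_cancel₀ (pow_ne_zero _ ha1) he1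
    have hu2 : (u : F) ^ (q ^ k - 1) = (v : F) ^ (q ^ k - 1) :=
      mul_right_cancel₀ (pow_ne_zero _ ha0) he2
    refine ⟨rfl, ?_⟩
    rw [hKmem]
    have hvalγ : ((u⁻¹ * v : Fˣ) : F) = ((u : F))⁻¹ * (v : F) := by
      rw [Units.val_mul]
      norm_cast
    have hγ1 : ((u⁻¹ * v : Fˣ) : F) ^ (q ^ k - q) = 1 := by
      rw [hvalγ, mul_pow, inv_pow, ← hu1, inv_mul_cancel₀ (pow_ne_zero _ u.ne_zero)]
    have hγ2 : ((u⁻¹ * v : Fˣ) : F) ^ (q ^ k - 1) = 1 := by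
      rw [hvalγ, mul_pow, inv_pow, ← hu2, inv_mul_cancel₀ (pow_ne_zero _ u.ne_zero)]
    have := hγ2
    rw [hsplitexp, pow_add, hγ1, one_mul] at this
    exact this
  -- classifying bijection
  set Θbar : (Fin n) × (Fˣ ⧸ K) → Submodule Fq F := fun z =>
    Quotient.liftOn' z.2 (fun u => Θ z.1 u) (fun a b hab =>
      hΘcongr z.1 a b (QuotientGroup.leftRel_apply.mp hab)) with hΘbardef
  have hinjbar : Function.Injective Θbar := by
    rintro ⟨i, c⟩ ⟨j, d⟩ h
    obtain ⟨u, rfl⟩ := Quotient.exists_rep c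
    obtain ⟨v, rfl⟩ := Quotient.exists_rep d
    have h' : Θ i u = Θ j v := h
    obtain ⟨hij', hK'⟩ := hΘinj i j i.2 j.2 u v h'
    refine Prod.ext (Fin.ext hij') ?_
    exact Quotient.sound (QuotientGroup.leftRel_apply.mpr hK')
  have horbrange : orbitCodeF q n V = Set.range Θbar := by
    ext W
    rw [horb W]
    constructor
    · rintro ⟨i, hi, u, rfl⟩
      exact ⟨(⟨i, hi⟩, Quotient.mk _ u), rfl⟩
    · rintro ⟨⟨i, c⟩, rfl⟩
      obtain ⟨u, rfl⟩ := Quotient.exists_rep c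
      exact ⟨(i : ℕ), i.2, u, rfl⟩
  constructor
  · rw [horbrange, ← Nat.card_coe_set_eq, Nat.card_range_of_injective hinjbar,
      Nat.card_prod, Nat.card_eq_fintype_card, Fintype.card_fin, hQt]
  · intro U hU W hW hUW
    obtain ⟨i, hi, u, rfl⟩ := (horb U).mp hU
    obtain ⟨j, hj, v, rfl⟩ := (horb W).mp hW
    by_cases hpair : (u : F) ^ (q ^ k - q) * a1 ^ q ^ i = (v : F) ^ (q ^ k - q) * a1 ^ q ^ j ∧
        (u : F) ^ (q ^ k - 1) * a0 ^ q ^ i = (v : F) ^ (q ^ k - 1) * a0 ^ q ^ j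
    · exfalso
      apply hUW
      apply SetLike.ext
      intro x
      rw [hΘmem, hΘmem, hpair.1, hpair.2]
    · have hcne : (u : F) ^ (q ^ k - q) * a1 ^ q ^ i - (v : F) ^ (q ^ k - q) * a1 ^ q ^ j ≠ 0 ∨
          (u : F) ^ (q ^ k - 1) * a0 ^ q ^ i - (v : F) ^ (q ^ k - 1) * a0 ^ q ^ j ≠ 0 := by
        by_contra hcc
        push_neg at hcc
        exact hpair ⟨sub_eq_zero.mp hcc.1, sub_eq_zero.mp hcc.2⟩
      have hsub : ((Θ i u ⊓ Θ j v : Submodule Fq F) : Set F) ⊆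
          {x : F | ((u : F) ^ (q ^ k - q) * a1 ^ q ^ i - (v : F) ^ (q ^ k - q) * a1 ^ q ^ j) * x ^ q
            + ((u : F) ^ (q ^ k - 1) * a0 ^ q ^ i - (v : F) ^ (q ^ k - 1) * a0 ^ q ^ j) * x = 0} := by
        intro x hx
        rw [SetLike.mem_coe, Submodule.mem_inf] at hx
        have h1 := (hΘmem i u x).mp hx.1
        have h2 := (hΘmem j v x).mp hx.2
        simp only [Set.mem_setOf_eq]
        linear_combination h1 - h2
      have hcard1 : Nat.card ↥(Θ i u ⊓ Θ j v) ≤ q := by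
        have e : ↥((Θ i u ⊓ Θ j v : Submodule Fq F) : Set F) ≃ ↥(Θ i u ⊓ Θ j v) :=
          Equiv.subtypeEquivRight fun x => Iff.rfl
        rw [← Nat.card_congr e, Nat.card_coe_set_eq]
        exact le_trans (Set.ncard_le_ncard hsub (Set.toFinite _)) (hsol_small _ _ hcne)
      have hcard2 : Nat.card ↥(Θ i u ⊓ Θ j v) = q ^ Module.finrank Fq ↥(Θ i u ⊓ Θ j v) := by
        letI : Fintype ↥(Θ i u ⊓ Θ j v) := Fintype.ofFinite _
        rw [Nat.card_eq_fintype_card, Module.card_eq_pow_finrank (K := Fq), hq]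
      by_contra hrank
      push_neg at hrank
      have h2le : q ^ 2 ≤ q ^ Module.finrank Fq ↥(Θ i u ⊓ Θ j v) :=
        Nat.pow_le_pow_right (by omega) hrank
      have : q < q ^ 2 := by nlinarith
      omega
end

section
/- Let d divide gcd(n,k) and let V be a k-dimensional F_q-subspace of F_{q^n}. Then V is an F_{q^d}-subspace of F_{q^n} if and only if its subspace polynomial has the form P_V(x) = sum_{i=0}^{k/d} c_i x^{q^{d i}} for some c_i in F_{q^n}. -/
open Polynomial

lemma subspacePoly_eval_eq_zero_iff {F : Type*} [Field F] [Fintype F] (V : Set F) (x : F) :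
    eval x (subspacePoly V) = 0 ↔ x ∈ V := by
  simp only [subspacePoly, eval_prod, Finset.prod_eq_zero_iff, Set.Finite.mem_toFinset,
    eval_sub, eval_X, eval_C, sub_eq_zero]
  constructor
  · rintro ⟨v, hv, rfl⟩; exact hv
  · exact fun h => ⟨x, h, rfl⟩

lemma pow_pow_fixed {F : Type*} [Field F] {r : ℕ} {x : F} (hx : x ^ r = x) :
    ∀ i, x ^ r ^ i = x := by
  intro i
  induction i with
  | zero => simp
  | succ i ih => rw [pow_succ', pow_mul, hx, ih]

lemma card_pow_fixed {F : Type*} [Field F] [Fintype F] (r : ℕ) (hr : 1 < r)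
    (hdvd : r - 1 ∣ Fintype.card F - 1) : Nat.card {x : F // x ^ r = x} = r := by
  classical
  have hQ1 : 1 < Fintype.card F := Fintype.one_lt_card
  obtain ⟨t, ht⟩ := hdvd
  have hg : (X ^ r - X : F[X]) ≠ 0 := FiniteField.X_pow_card_sub_X_ne_zero F hr
  have hh : (X ^ Fintype.card F - X : F[X]) ≠ 0 := FiniteField.X_pow_card_sub_X_ne_zero F hQ1
  have hXr : (X ^ r - X : F[X]) = X * (X ^ (r - 1) - 1) := by
    rw [mul_sub, mul_one, ← pow_succ', Nat.sub_add_cancel (by omega)]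
  have hXQ : (X ^ Fintype.card F - X : F[X]) = X * (X ^ (Fintype.card F - 1) - 1) := by
    rw [mul_sub, mul_one, ← pow_succ', Nat.sub_add_cancel (by omega)]
  have hdvd' : (X ^ r - X : F[X]) ∣ X ^ Fintype.card F - X := by
    rw [hXr, hXQ]
    refine mul_dvd_mul_left _ ?_
    have := sub_dvd_pow_sub_pow (X ^ (r - 1) : F[X]) 1 t
    rwa [one_pow, ← pow_mul, ← ht] at this
  have hroots : (X ^ Fintype.card F - X : F[X]).roots = Finset.univ.val :=
    FiniteField.roots_X_pow_card_sub_X F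
  have hle : (X ^ r - X : F[X]).roots ≤ (X ^ Fintype.card F - X : F[X]).roots :=
    roots.le_of_dvd hh hdvd'
  have hnodup : (X ^ r - X : F[X]).roots.Nodup :=
    Multiset.nodup_of_le hle (by rw [hroots]; exact Finset.univ.nodup)
  have hsplit_h : Splits (X ^ Fintype.card F - X : F[X]) := by
    rw [splits_iff_card_roots, hroots, FiniteField.X_pow_card_sub_X_natDegree_eq F hQ1]
    simp
  have hsplit_g : Splits (X ^ r - X : F[X]) :=
    hsplit_h.of_dvd hh hdvd'
  have hcardroots : (X ^ r - X : F[X]).roots.card = r := by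
    rw [splits_iff_card_roots.mp hsplit_g, FiniteField.X_pow_card_sub_X_natDegree_eq F hr]
  have hset : (Finset.univ.filter fun x : F => x ^ r = x) = (X ^ r - X : F[X]).roots.toFinset := by
    ext x
    simp [Multiset.mem_toFinset, mem_roots hg, sub_eq_zero]
  rw [Nat.card_eq_fintype_card, Fintype.card_subtype, hset,
    Multiset.toFinset_card_of_nodup hnodup, hcardroots]

section FixedSubfield

variable {F : Type*} [Field F] (p : ℕ) [Fact p.Prime] [CharP F p]

def fixedSubfield (e : ℕ) : Subfield F where
  carrier := {x : F | x ^ p ^ e = x}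
  one_mem' := one_pow _
  mul_mem' := by intro a b ha hb; simp only [Set.mem_setOf_eq] at *; rw [mul_pow, ha, hb]
  zero_mem' := zero_pow (pow_ne_zero _ (Fact.out : p.Prime).ne_zero)
  add_mem' := by
    intro a b ha hb; simp only [Set.mem_setOf_eq] at *; rw [add_pow_char_pow, ha, hb]
  neg_mem' := by
    intro a ha; simp only [Set.mem_setOf_eq] at *
    have := sub_pow_char_pow (R := F) (p := p) (n := e) (x := 0) (y := a)
    simpa [ha, zero_pow (pow_ne_zero e (Fact.out : p.Prime).ne_zero)] using this
  inv_mem' := by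
    intro a ha; simp only [Set.mem_setOf_eq] at *; rw [inv_pow, ha]

lemma mem_fixedSubfield_iff (e : ℕ) (x : F) : x ∈ fixedSubfield p e ↔ x ^ p ^ e = x := Iff.rfl


end FixedSubfield

lemma prod_linear_eq {F : Type*} [Field F] (r : ℕ) (hr : 1 < r) {b : F} (hb : b ≠ 0)
    (K : Subfield F) [Fintype K] (hK : ∀ x : F, x ∈ K ↔ x ^ r = x)
    (hKcard : Fintype.card K = r) :
    ∏ lam : K, ((X : F[X]) - C ((lam : F) * b)) = X ^ r - C (b ^ (r - 1)) * X := by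
  classical
  set T : Finset F := Finset.univ.image (fun lam : K => (lam : F) * b) with hT
  have hinj : Function.Injective (fun lam : K => (lam : F) * b) := by
    intro x y hxy
    exact Subtype.ext (mul_right_cancel₀ hb hxy)
  have hTcard : T.card = r := by
    rw [hT, Finset.card_image_of_injective _ hinj, Finset.card_univ, hKcard]
  have hLHS : ∏ lam : K, ((X : F[X]) - C ((lam : F) * b)) = ∏ μ ∈ T, (X - C μ) := by
    rw [hT, Finset.prod_image (fun x _ y _ h => hinj h)]
  rw [hLHS]
  set P : F[X] := ∏ μ ∈ T, (X - C μ) with hP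
  set Q : F[X] := X ^ r - C (b ^ (r - 1)) * X with hQ
  have hPmonic : P.Monic := monic_prod_of_monic _ _ fun μ _ => monic_X_sub_C μ
  have hPdeg : P.natDegree = r := by
    rw [hP, natDegree_prod _ _ fun μ _ => X_sub_C_ne_zero μ]
    simp [hTcard]
  have hdegCX : (C (b ^ (r - 1)) * X : F[X]).degree < (X ^ r : F[X]).degree := by
    rw [degree_X_pow]
    exact lt_of_le_of_lt (degree_C_mul_X_le _) (by exact_mod_cast hr)
  have hQmonic : Q.Monic := (monic_X_pow r).sub_of_left hdegCX
  have hQdeg : Q.degree = r := by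
    rw [hQ, degree_sub_eq_left_of_degree_lt hdegCX, degree_X_pow]
  have hroots : ∀ μ ∈ T, eval μ Q = 0 := by
    intro μ hμ
    rw [hT, Finset.mem_image] at hμ
    obtain ⟨lam, -, rfl⟩ := hμ
    have hlam : (lam : F) ^ r = (lam : F) := (hK _).mp lam.2
    simp only [hQ, eval_sub, eval_pow, eval_X, eval_mul, eval_C]
    rw [mul_pow, hlam]
    have : b ^ r = b ^ (r - 1) * b := by
      rw [← pow_succ, Nat.sub_add_cancel hr.le]
    rw [this]; ring
  have hD : Q - P = 0 := by
    by_cases h0 : Q - P = 0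
    · exact h0
    refine eq_zero_of_natDegree_lt_card_of_eval_eq_zero' _ T ?_ ?_
    · intro μ hμ
      rw [eval_sub, hroots μ hμ, hP, eval_prod]
      rw [Finset.prod_eq_zero hμ (by simp)]
      ring
    · have hdeglt : (Q - P).degree < (r : WithBot ℕ) := by
        rw [← hQdeg]
        refine degree_sub_lt ?_ hQmonic.ne_zero (by rw [hQmonic.leadingCoeff, hPmonic.leadingCoeff])
        rw [hQdeg, degree_eq_natDegree hPmonic.ne_zero, hPdeg]
      rw [hTcard]
      exact (natDegree_lt_iff_degree_lt h0).mpr (by rw [← Nat.cast_id r] at hdeglt; exact_mod_cast hdeglt)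
  rw [sub_eq_zero] at hD; exact hD.symm

set_option maxHeartbeats 1000000 in
set_option synthInstance.maxHeartbeats 400000 in
lemma subspacePoly_form {F : Type*} [Field F] [Fintype F] (p : ℕ) [Fact p.Prime] [CharP F p]
    (r e : ℕ) (he : 0 < e) (hre : r = p ^ e)
    (K : Subfield F) [Fintype K] (hK : ∀ x : F, x ∈ K ↔ x ^ r = x)
    (hKcard : Fintype.card K = r) :
    ∀ (m : ℕ) (W : Submodule K F), Module.finrank K W = m →
    ∃ c : ℕ → F, (∀ j, m < j → c j = 0) ∧
      subspacePoly (W : Set F) = ∑ i ∈ Finset.range (m + 1), C (c i) * X ^ r ^ i := by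
  classical
  have hr1 : 1 < r := by
    rw [hre]; exact Nat.one_lt_pow he.ne' (Fact.out : p.Prime).one_lt
  intro m
  induction m with
  | zero =>
    intro W hW
    rw [Submodule.finrank_eq_zero] at hW
    subst hW
    refine ⟨fun i => if i = 0 then 1 else 0, fun j hj => if_neg (by omega), ?_⟩
    have h0 : ((⊥ : Submodule K F) : Set F).toFinite.toFinset = {0} := by
      ext x
      rw [Set.Finite.mem_toFinset, Finset.mem_singleton, SetLike.mem_coe, Submodule.mem_bot]
    rw [subspacePoly, h0, Finset.prod_singleton]
    simp
  | succ m ih =>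
    intro W hW
    -- basis of W
    let bW : Module.Basis (Fin (m + 1)) K W := (Module.finBasis K W).reindex (finCongr hW)
    set v : Fin (m + 1) → F := fun i => (bW i : F) with hv
    have hli : LinearIndependent K v := bW.linearIndependent.map' W.subtype W.ker_subtype
    have hspan : Submodule.span K (Set.range v) = W := by
      have h1 : Set.range v = W.subtype '' Set.range bW := by
        rw [← Set.range_comp]; rfl
      rw [h1, Submodule.span_image, bW.span_eq, Submodule.map_top, Submodule.range_subtype]
    set u : F := v (Fin.last m) with hu
    set W' : Submodule K F := Submodule.span K (Set.range (v ∘ Fin.castSucc)) with hW'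
    have hli' : LinearIndependent K (v ∘ Fin.castSucc) :=
      hli.comp _ (Fin.castSucc_injective m)
    have hW'rank : Module.finrank K W' = m := by
      rw [hW', finrank_span_eq_card hli', Fintype.card_fin]
    have hu_not : u ∉ W' := by
      have h1 : Set.range (v ∘ Fin.castSucc) = v '' Set.range Fin.castSucc := Set.range_comp v _
      rw [hW', h1]
      refine hli.notMem_span_image ?_
      rintro ⟨j, hj⟩
      exact absurd hj (Fin.castSucc_lt_last j).ne
    have hWsup : W' ⊔ Submodule.span K {u} = W := by
      rw [← hspan, hW', ← Submodule.span_union]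
      congr 1
      ext x
      constructor
      · rintro (⟨j, rfl⟩ | rfl)
        · exact ⟨_, rfl⟩
        · exact ⟨Fin.last m, rfl⟩
      · rintro ⟨i, rfl⟩
        rcases Fin.eq_castSucc_or_eq_last i with ⟨j, rfl⟩ | rfl
        · exact Or.inl ⟨j, rfl⟩
        · exact Or.inr rfl
    have hW'le : W' ≤ W := by rw [← hWsup]; exact le_sup_left
    have huW : u ∈ W := by rw [← hspan]; exact Submodule.subset_span ⟨Fin.last m, rfl⟩
    -- coset product decomposition
    have hprod : subspacePoly (W : Set F) =
        ∏ lam : K, ∏ w ∈ ((W' : Set F).toFinite.toFinset), (X - C (w + (lam : F) * u)) := by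
      rw [← Finset.prod_product', subspacePoly]
      refine (Finset.prod_bij (fun z _ => z.2 + (z.1 : F) * u) ?_ ?_ ?_ ?_).symm
      · rintro ⟨lam, w⟩ hz
        simp only [Finset.mem_product, Finset.mem_univ, true_and, Set.Finite.mem_toFinset,
          SetLike.mem_coe] at hz ⊢
        exact Submodule.add_mem _ (hW'le hz) (Submodule.smul_mem _ lam huW)
      · rintro ⟨lam, w⟩ hz ⟨lam', w'⟩ hz' heq
        simp only [Finset.mem_product, Finset.mem_univ, true_and, Set.Finite.mem_toFinset,
          SetLike.mem_coe] at hz hz'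
        dsimp only at heq
        simp only [Prod.mk.injEq]
        by_cases hl : lam = lam'
        · subst hl
          refine ⟨rfl, ?_⟩
          have := heq
          rwa [add_left_inj] at this
        · exfalso
          have hclam : (lam : F) - (lam' : F) ≠ 0 := by
            rw [sub_ne_zero]
            exact fun h => hl (Subtype.ext h)
          have h2 : ((lam : F) - (lam' : F)) * u = w' - w := by
            linear_combination heq
          have hμ : ((((lam - lam')⁻¹ : K)) : F) = ((lam : F) - (lam' : F))⁻¹ := by
            push_cast
            ring
          have hueq : u = ((lam - lam')⁻¹ : K) • (w' - w) := by
            show u = ((((lam - lam')⁻¹ : K)) : F) * (w' - w)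
            rw [hμ, ← h2, inv_mul_cancel_left₀ hclam]
          exact hu_not (hueq ▸ W'.smul_mem _ (sub_mem hz' hz))
      · rintro x hx
        simp only [Set.Finite.mem_toFinset, SetLike.mem_coe] at hx
        rw [← hWsup] at hx
        obtain ⟨w, hw, z, hzmem, hwz⟩ := Submodule.mem_sup.mp hx
        obtain ⟨lam, rfl⟩ := Submodule.mem_span_singleton.mp hzmem
        refine ⟨(lam, w), ?_, ?_⟩
        · simp only [Finset.mem_product, Finset.mem_univ, true_and, Set.Finite.mem_toFinset,
            SetLike.mem_coe]
          exact hw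
        · exact hwz
      · intros; rfl
    -- IH
    obtain ⟨c, hc0, hPW'⟩ := ih W' hW'rank
    set PW' : F[X] := subspacePoly (W' : Set F) with hPW'def
    have hbne : eval u PW' ≠ 0 := by
      rw [hPW'def, Ne, subspacePoly_eval_eq_zero_iff]
      exact hu_not
    set bval : F := eval u PW' with hbval
    have hfrobCX : ∀ (a : F) (i : ℕ), ((X : F[X]) - C a) ^ r ^ i = X ^ r ^ i - C (a ^ r ^ i) := by
      intro a i
      have : r ^ i = p ^ (e * i) := by rw [hre, ← pow_mul]
      rw [this, sub_pow_char_pow, ← C_pow]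
    have hbval_sum : bval = ∑ i ∈ Finset.range (m + 1), c i * u ^ r ^ i := by
      rw [hbval, hPW']
      simp [eval_finset_sum]
    have hinner : ∀ lam : K,
        (∏ w ∈ (W' : Set F).toFinite.toFinset, (X - C (w + (lam : F) * u)))
        = PW' - C ((lam : F) * bval) := by
      intro lam
      have h1 : (∏ w ∈ (W' : Set F).toFinite.toFinset, (X - C (w + (lam : F) * u)))
          = PW'.comp (X - C ((lam : F) * u)) := by
        rw [hPW'def, subspacePoly, prod_comp]
        refine Finset.prod_congr rfl fun w _ => ?_
        rw [sub_comp, X_comp, C_comp, C_add]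
        ring
      rw [h1, hPW', sum_comp]
      have h2 : ∀ i ∈ Finset.range (m + 1), (C (c i) * X ^ r ^ i).comp (X - C ((lam : F) * u))
          = C (c i) * X ^ r ^ i - C (c i * ((lam : F) * u) ^ r ^ i) := by
        intro i _
        rw [mul_comp, C_comp, pow_comp, X_comp, hfrobCX, mul_sub, ← C_mul]
      rw [Finset.sum_congr rfl h2, Finset.sum_sub_distrib, ← hPW', ← map_sum]
      congr 2
      have hlam : (lam : F) ^ r = (lam : F) := (hK _).mp lam.2
      rw [hbval_sum, Finset.mul_sum]
      refine Finset.sum_congr rfl fun i _ => ?_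
      rw [mul_pow, pow_pow_fixed hlam]
      ring
    have hkey := prod_linear_eq r hr1 hbne K hK hKcard
    have happ := congrArg (fun g : F[X] => aeval PW' g) hkey
    simp only [map_prod, map_sub, map_pow, map_mul, aeval_X, aeval_C,
      Polynomial.algebraMap_eq] at happ
    simp only [← C_mul, ← C_pow] at happ
    have hfinal : subspacePoly (W : Set F) = PW' ^ r - C (bval ^ (r - 1)) * PW' := by
      rw [hprod, Finset.prod_congr rfl (fun lam _ => hinner lam), happ]
    -- assemble coefficients
    refine ⟨fun i => (if i = 0 then 0 else c (i - 1) ^ r) - bval ^ (r - 1) * c i, ?_, ?_⟩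
    · intro j hj
      have h1 : c j = 0 := hc0 j (by omega)
      have h2 : c (j - 1) = 0 := hc0 (j - 1) (by omega)
      simp [h1, h2, if_neg (show j ≠ 0 by omega), zero_pow (show r ≠ 0 by omega)]
    · rw [hfinal]
      have hP1 : PW' ^ r = ∑ i ∈ Finset.range (m + 1), C (c i ^ r) * X ^ r ^ (i + 1) := by
        rw [hPW']
        rw [hre, sum_pow_char_pow, ← hre]
        refine Finset.sum_congr rfl fun i _ => ?_
        rw [mul_pow, ← C_pow, ← pow_mul, ← pow_succ]
      have hP2 : C (bval ^ (r - 1)) * PW'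
          = ∑ i ∈ Finset.range (m + 1), C (bval ^ (r - 1) * c i) * X ^ r ^ i := by
        rw [hPW', Finset.mul_sum]
        refine Finset.sum_congr rfl fun i _ => ?_
        rw [← mul_assoc, ← C_mul]
      rw [hP1, hP2]
      have hsplit : ∀ i ∈ Finset.range (m + 2),
          C ((if i = 0 then 0 else c (i - 1) ^ r) - bval ^ (r - 1) * c i) * X ^ r ^ i
          = C (if i = 0 then 0 else c (i - 1) ^ r) * X ^ r ^ i
            - C (bval ^ (r - 1) * c i) * X ^ r ^ i := by
        intro i _
        rw [C_sub, sub_mul]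
      rw [Finset.sum_congr rfl hsplit, Finset.sum_sub_distrib]
      congr 1
      · conv_rhs => rw [Finset.sum_range_succ']
        simp
      · conv_rhs => rw [Finset.sum_range_succ]
        rw [hc0 (m + 1) (by omega), mul_zero, C_0, zero_mul, add_zero]

set_option maxHeartbeats 1000000 in
set_option synthInstance.maxHeartbeats 400000 in
theorem stmt15 (q n k d : ℕ) (hd : d ∣ Nat.gcd n k) (hd0 : 0 < d)
    (Fq F : Type*) [Field Fq] [Fintype Fq] [Field F] [Fintype F] [Algebra Fq F]
    (hq : Fintype.card Fq = q) (hn : Module.finrank Fq F = n)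
    (V : Submodule Fq F) (hkV : Module.finrank Fq V = k) :
    (∀ c x : F, c ^ q ^ d = c → x ∈ V → c * x ∈ V) ↔
      ∃ c : ℕ → F, subspacePoly (V : Set F) =
        ∑ i ∈ Finset.range (k / d + 1), C (c i) * X ^ q ^ (d * i) := by
  classical
  have hq2 : 1 < q := hq ▸ Fintype.one_lt_card
  have hdn : d ∣ n := hd.trans (Nat.gcd_dvd_left n k)
  set p := ringChar Fq with hp
  haveI hchFq : CharP Fq p := ringChar.charP Fq
  haveI : CharP F p := charP_of_injective_algebraMap (algebraMap Fq F).injective p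
  haveI hfact : Fact p.Prime := ⟨CharP.char_is_prime Fq p⟩
  obtain ⟨s, hps, hcardFq⟩ := FiniteField.card Fq p
  have hqps : q = p ^ (s : ℕ) := by rw [← hq, hcardFq]
  have hcardF : Fintype.card F = q ^ n := by
    rw [← hq, ← hn, Module.card_eq_pow_finrank (K := Fq) (V := F)]
  set r := q ^ d with hrdef
  have hr1 : 1 < r := Nat.one_lt_pow hd0.ne' hq2
  have hre : r = p ^ (s * d : ℕ) := by rw [hrdef, hqps, pow_mul]
  have he : 0 < (s * d : ℕ) := Nat.mul_pos s.2 hd0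
  set K : Subfield F := fixedSubfield p (s * d) with hKdef
  have hK : ∀ x : F, x ∈ K ↔ x ^ r = x := by
    intro x
    rw [hKdef, mem_fixedSubfield_iff, ← hre]
  haveI : Fintype K := Fintype.ofFinite _
  have hdvd1 : r - 1 ∣ Fintype.card F - 1 := by
    obtain ⟨t, rfl⟩ := hdn
    rw [hcardF, pow_mul, ← hrdef]
    simpa using Nat.sub_dvd_pow_sub_pow r 1 t
  have hKcard : Fintype.card K = r := by
    rw [← Nat.card_eq_fintype_card, ← card_pow_fixed r hr1 hdvd1]
    exact Nat.card_congr (Equiv.subtypeEquivRight fun x => hK x)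
  constructor
  · intro hcl
    set V' : Submodule K F :=
      { carrier := (V : Set F)
        add_mem' := fun ha hb => V.add_mem ha hb
        zero_mem' := V.zero_mem
        smul_mem' := fun c {x} hx => by
          show (c : F) * x ∈ V
          exact hcl (c : F) x ((hK _).mp c.2) hx } with hV'def
    obtain ⟨c, hc0, hform⟩ :=
      subspacePoly_form p r (s * d) he hre K hK hKcard (Module.finrank K V') V' rfl
    haveI : Fintype V := Fintype.ofFinite _
    haveI : Fintype V' := Fintype.ofFinite _
    have hcV : Fintype.card V = q ^ k := by rw [← hq, ← hkV, Module.card_eq_pow_finrank (K := Fq) (V := V)]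
    have hcV' : Fintype.card V' = r ^ Module.finrank K V' := by
      rw [← hKcard, Module.card_eq_pow_finrank (K := K) (V := V')]
    have hcards : Fintype.card V' = Fintype.card V := by
      rw [← Nat.card_eq_fintype_card, ← Nat.card_eq_fintype_card]
      exact Nat.card_congr (Equiv.subtypeEquivRight fun x => Iff.rfl)
    have hkdm : k = d * Module.finrank K V' := by
      have h1 : q ^ k = q ^ (d * Module.finrank K V') := by
        rw [← hcV, ← hcards, hcV', hrdef, ← pow_mul]
      exact Nat.pow_right_injective hq2 h1
    have hkd : k / d = Module.finrank K V' := by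
      rw [hkdm, Nat.mul_div_cancel_left _ hd0]
    refine ⟨c, ?_⟩
    have hVV' : (V : Set F) = (V' : Set F) := rfl
    rw [hVV', hform, hkd]
    refine Finset.sum_congr rfl fun i _ => ?_
    rw [pow_mul, ← hrdef]
  · rintro ⟨c, hc⟩ γ x hγ hx
    have hx0 : eval x (subspacePoly (V : Set F)) = 0 :=
      (subspacePoly_eval_eq_zero_iff _ _).mpr hx
    have h1 : eval (γ * x) (subspacePoly (V : Set F)) = 0 := by
      rw [hc] at hx0 ⊢
      simp only [eval_finset_sum, eval_mul, eval_C, eval_pow, eval_X] at hx0 ⊢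
      have hfix : ∀ i : ℕ, γ ^ q ^ (d * i) = γ := fun i => by
        rw [pow_mul]
        exact pow_pow_fixed hγ i
      have hterm : ∀ i ∈ Finset.range (k / d + 1),
          c i * (γ * x) ^ q ^ (d * i) = γ * (c i * x ^ q ^ (d * i)) := by
        intro i _
        rw [mul_pow, hfix i]
        ring
      rw [Finset.sum_congr rfl hterm, ← Finset.mul_sum, hx0, mul_zero]
    exact (subspacePoly_eval_eq_zero_iff _ _).mp h1
end

section
/- Let d divide gcd(n,k) and let C_d be the set of k-dimensional F_q-subspaces of F_{q^n} that are F_{q^d}-subspaces. Then C_d is cyclic: for every V in C_d and alpha in F_{q^n}^*, alpha V is in C_d. Moreover |C_d| equals the Gaussian binomial coefficient [n/d choose k/d]_{q^d}, and any two distinct members U, V of C_d satisfy dim_{F_q}(U ∩ V) <= k - d, i.e., the minimum subspace distance of C_d is at least 2d. -/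
open Polynomial Module

section Counting
open Module

variable {K V : Type*} [Field K] [Fintype K] [AddCommGroup V] [Module K V] [Finite V]

theorem fiber_equiv (r : ℕ) (W : Submodule K V) (hW : finrank K ↥W = r) :
    Nonempty ({ s : Fin r → V // LinearIndependent K s ∧ Submodule.span K (Set.range s) = W }
      ≃ { t : Fin r → ↥W // LinearIndependent K t }) := by
  classical
  have : FiniteDimensional K ↥W := Module.Finite.of_finite
  have hmem : ∀ (s : { s : Fin r → V // LinearIndependent K s ∧
      Submodule.span K (Set.range s) = W }) (i : Fin r), s.1 i ∈ W := fun s i => by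
    have := Submodule.subset_span (R := K) (Set.mem_range_self (f := s.1) i)
    rwa [s.2.2] at this
  refine ⟨{
    toFun := fun s => ⟨fun i => ⟨s.1 i, hmem s i⟩, by
      have := s.2.1
      have hcomp : s.1 = W.subtype ∘ (fun i => (⟨s.1 i, hmem s i⟩ : ↥W)) := rfl
      rw [hcomp] at this
      exact LinearIndependent.of_comp W.subtype this⟩
    invFun := fun t => ⟨fun i => (t.1 i : V),
      t.2.map' W.subtype (Submodule.ker_subtype W), by
      have h1 : Submodule.span K (Set.range t.1) = ⊤ := by
        apply Submodule.eq_top_of_finrank_eq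
        rw [finrank_span_eq_card t.2, Fintype.card_fin, hW]
      have h2 : Set.range (fun i => (t.1 i : V)) = (W.subtype) '' (Set.range t.1) := by
        rw [← Set.range_comp]; rfl
      rw [h2, ← Submodule.map_span, h1, Submodule.map_top, Submodule.range_subtype]⟩
    left_inv := fun s => by ext i; rfl
    right_inv := fun t => by ext i; rfl }⟩

theorem count_subspaces (r : ℕ) (hr : r ≤ finrank K V) :
    Nat.card {W : Submodule K V // finrank K ↥W = r} *
      ∏ i ∈ Finset.range r, (Fintype.card K ^ r - Fintype.card K ^ i) =
    ∏ i ∈ Finset.range r, (Fintype.card K ^ finrank K V - Fintype.card K ^ i) := by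
  classical
  have : FiniteDimensional K V := Module.Finite.of_finite
  have : Fintype V := Fintype.ofFinite V
  have : Fintype {W : Submodule K V // finrank K ↥W = r} := Fintype.ofFinite _
  have : Fintype { s : Fin r → V // LinearIndependent K s } := Fintype.ofFinite _
  set Q := Fintype.card K with hQ
  let f : { s : Fin r → V // LinearIndependent K s } → {W : Submodule K V // finrank K ↥W = r} :=
    fun s => ⟨Submodule.span K (Set.range s.1), by
      rw [finrank_span_eq_card s.2, Fintype.card_fin]⟩
  have key : ∀ W : {W : Submodule K V // finrank K ↥W = r},
      Fintype.card {s : { s : Fin r → V // LinearIndependent K s } // f s = W} =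
        ∏ i ∈ Finset.range r, (Q ^ r - Q ^ i) := by
    intro W
    have e1 : {s : { s : Fin r → V // LinearIndependent K s } // f s = W} ≃
        { s : Fin r → V // LinearIndependent K s ∧ Submodule.span K (Set.range s) = W.1 } := {
      toFun := fun s => ⟨s.1.1, s.1.2, congrArg Subtype.val s.2⟩
      invFun := fun s => ⟨⟨s.1, s.2.1⟩, Subtype.ext s.2.2⟩
      left_inv := fun s => rfl
      right_inv := fun s => rfl }
    obtain ⟨e2⟩ := fiber_equiv r W.1 W.2
    have : FiniteDimensional K ↥W.1 := Module.Finite.of_finite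
    rw [← Nat.card_eq_fintype_card, Nat.card_congr (e1.trans e2)]
    have := card_linearIndependent (K := K) (V := ↥W.1) (k := r) (le_of_eq W.2.symm)
    rw [this, W.2, Finset.prod_range]
  have total : Fintype.card { s : Fin r → V // LinearIndependent K s } =
      Fintype.card {W : Submodule K V // finrank K ↥W = r} *
        ∏ i ∈ Finset.range r, (Q ^ r - Q ^ i) := by
    rw [Fintype.card_congr (Equiv.sigmaFiberEquiv f).symm, Fintype.card_sigma,
      Finset.sum_congr rfl fun W _ => key W, Finset.sum_const, smul_eq_mul,
      Finset.card_univ]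
  rw [Nat.card_eq_fintype_card, ← total, ← Nat.card_eq_fintype_card,
    card_linearIndependent hr, Finset.prod_range]
open Polynomial Module

theorem card_fixed (F : Type*) [Field F] [Fintype F] (q n d : ℕ) (hq : 1 < q)
    (hd0 : 0 < d) (hdn : d ∣ n) (hcard : Fintype.card F = q ^ n) :
    Nat.card {x : F // x ^ q ^ d = x} = q ^ d := by
  classical
  have hqd1 : 1 < q ^ d := Nat.one_lt_pow hd0.ne' hq
  have hn0 : n ≠ 0 := by
    rintro rfl
    rw [pow_zero] at hcard
    have := Fintype.one_lt_card (α := F)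
    omega
  have hqn1 : 1 < q ^ n := Nat.one_lt_pow hn0 hq
  have hdvd1 : q ^ d - 1 ∣ q ^ n - 1 := by
    obtain ⟨m, rfl⟩ := hdn
    simpa [pow_mul] using Nat.sub_dvd_pow_sub_pow (q ^ d) 1 m
  set f : F[X] := X ^ q ^ d - X with hf
  set g : F[X] := X ^ q ^ n - X with hg
  have hfg : f ∣ g := by
    obtain ⟨m, hm⟩ := hdvd1
    have h1 : (X : F[X]) ^ (q ^ d - 1) - 1 ∣ X ^ (q ^ n - 1) - 1 := by
      have := sub_dvd_pow_sub_pow ((X : F[X]) ^ (q ^ d - 1)) 1 m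
      simpa [← pow_mul, ← hm] using this
    have e1 : f = ((X : F[X]) ^ (q ^ d - 1) - 1) * X := by
      rw [hf, show q ^ d = (q ^ d - 1) + 1 from (Nat.succ_pred_eq_of_pos (by omega)).symm,
        pow_succ, sub_mul, one_mul]
      simp
    have e2 : g = ((X : F[X]) ^ (q ^ n - 1) - 1) * X := by
      rw [hg, show q ^ n = (q ^ n - 1) + 1 from (Nat.succ_pred_eq_of_pos (by omega)).symm,
        pow_succ, sub_mul, one_mul]
      simp
    rw [e1, e2]
    exact mul_dvd_mul_right h1 X
  have hf0 : f ≠ 0 := FiniteField.X_pow_card_sub_X_ne_zero F hqd1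
  have hg0 : g ≠ 0 := FiniteField.X_pow_card_sub_X_ne_zero F hqn1
  have hgroots : g.roots = Finset.univ.val := by
    have := FiniteField.roots_X_pow_card_sub_X F
    rwa [hcard] at this
  have hgsplits : g.Splits := by
    rw [splits_iff_card_roots, hgroots]
    simpa [hcard] using (FiniteField.X_pow_card_sub_X_natDegree_eq F hqn1).symm
  have hfsplits : f.Splits := Splits.of_dvd hgsplits hg0 hfg
  have hfroots_card : Multiset.card f.roots = q ^ d := by
    rw [splits_iff_card_roots.mp hfsplits]
    exact FiniteField.X_pow_card_sub_X_natDegree_eq F hqd1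
  have hnodup : f.roots.Nodup := by
    have hle := Polynomial.roots.le_of_dvd hg0 hfg
    rw [hgroots] at hle
    exact Multiset.nodup_of_le hle Finset.univ.nodup
  have hset : {x : F | x ^ q ^ d = x} = ↑f.roots.toFinset := by
    ext x
    simp [hf, Polynomial.mem_roots hf0, Polynomial.IsRoot.def, sub_eq_zero,
      show ¬(X : F[X]) ^ q ^ d = X from fun h => hf0 (by rw [hf, h, sub_self])]
  have h0 : Nat.card {x : F // x ^ q ^ d = x} = Set.ncard {x : F | x ^ q ^ d = x} := rfl
  rw [h0, hset, Set.ncard_coe_finset, Multiset.toFinset_card_of_nodup hnodup, hfroots_card]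

end Counting

def gaussBinom (Q m r : ℕ) : ℕ :=
  (∏ i ∈ Finset.range r, (Q ^ m - Q ^ i)) / (∏ i ∈ Finset.range r, (Q ^ r - Q ^ i))

def Cdd (q d k : ℕ) (Fq F : Type*) [Field Fq] [Field F] [Algebra Fq F] :
    Set (Submodule Fq F) :=
  {V | Module.finrank Fq V = k ∧ ∀ c x : F, c ^ q ^ d = c → x ∈ V → c * x ∈ V}

set_option maxHeartbeats 1000000 in
set_option synthInstance.maxHeartbeats 200000 in
theorem stmt16 (q n k d : ℕ) (hd : d ∣ Nat.gcd n k) (hd0 : 0 < d) (hk : 0 < k) (hkn : k < n)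
    (Fq F : Type*) [Field Fq] [Fintype Fq] [Field F] [Fintype F] [Algebra Fq F]
    (hq : Fintype.card Fq = q) (hn : Module.finrank Fq F = n) :
    (∀ V ∈ Cdd q d k Fq F, ∀ α : F, α ≠ 0 →
      V.map (LinearMap.mulLeft Fq α) ∈ Cdd q d k Fq F) ∧
    Set.ncard (Cdd q d k Fq F) = gaussBinom (q ^ d) (n / d) (k / d) ∧
    ∀ U ∈ Cdd q d k Fq F, ∀ V ∈ Cdd q d k Fq F, U ≠ V →
      Module.finrank Fq ↥(U ⊓ V) ≤ k - d := by
  classical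
  have hq1 : 1 < q := hq ▸ Fintype.one_lt_card
  have hdn : d ∣ n := hd.trans (Nat.gcd_dvd_left n k)
  have hdk : d ∣ k := hd.trans (Nat.gcd_dvd_right n k)
  have hcardF : Fintype.card F = q ^ n := by
    rw [← hq, ← hn]; exact card_eq_pow_finrank
  -- characteristic
  set p := ringChar Fq with hp
  haveI hpF : CharP Fq p := ringChar.charP Fq
  obtain ⟨e, hpprime, hqe⟩ := FiniteField.card Fq p
  rw [hq] at hqe
  haveI : Fact p.Prime := ⟨hpprime⟩
  haveI hcharF : CharP F p := charP_of_injective_algebraMap (algebraMap Fq F).injective p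
  have hfrob : ∀ x y : F, (x + y) ^ q ^ d = x ^ q ^ d + y ^ q ^ d := by
    intro x y
    rw [hqe, ← pow_mul]
    exact add_pow_char_pow x y p (↑e * d)
  have hneg1 : (-1 : F) ^ q ^ d = -1 := by
    rw [hqe, ← pow_mul]
    exact neg_one_pow_char_pow F p (↑e * d)
  -- the subfield
  set K : Subfield F :=
    { carrier := {x : F | x ^ q ^ d = x}
      mul_mem' := fun {a b} ha hb => by
        simp only [Set.mem_setOf_eq] at *
        rw [mul_pow, ha, hb]
      one_mem' := one_pow _
      add_mem' := fun {a b} ha hb => by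
        simp only [Set.mem_setOf_eq] at *
        rw [hfrob, ha, hb]
      zero_mem' := zero_pow (by positivity)
      neg_mem' := fun {a} ha => by
        simp only [Set.mem_setOf_eq] at *
        rw [show (-a : F) = -1 * a by ring, mul_pow, hneg1, ha]
      inv_mem' := fun a ha => by
        simp only [Set.mem_setOf_eq] at *
        rw [inv_pow, ha] } with hK
  have hKmem : ∀ x : F, x ∈ K ↔ x ^ q ^ d = x := fun x => Iff.rfl
  haveI : Fintype ↥K := Fintype.ofFinite ↥K
  have hKcard : Fintype.card ↥K = q ^ d := by
    rw [← Nat.card_eq_fintype_card]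
    rw [Nat.card_congr (Equiv.subtypeEquivRight fun x => hKmem x)]
    exact card_fixed F q n d hq1 hd0 hdn hcardF
  -- algebra structure
  have halg : ∀ c : Fq, (algebraMap Fq F c) ∈ K := fun c => by
    rw [hKmem, ← map_pow, ← hq, FiniteField.pow_card_pow]
  letI : Algebra Fq ↥K := ((algebraMap Fq F).codRestrict K halg).toAlgebra
  haveI : IsScalarTower Fq ↥K F := IsScalarTower.of_algebraMap_eq fun c => rfl
  haveI : FiniteDimensional Fq F := Module.Finite.of_finite
  haveI : FiniteDimensional Fq ↥K := Module.Finite.of_finite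
  haveI : FiniteDimensional ↥K F := Module.Finite.of_finite
  -- dimensions
  have hdK : finrank Fq ↥K = d := by
    have h1 : Fintype.card ↥K = q ^ finrank Fq ↥K := by
      rw [← hq]; exact card_eq_pow_finrank
    rw [hKcard] at h1
    exact (Nat.pow_right_injective hq1 h1.symm)
  have hnK : finrank ↥K F = n / d := by
    have h2 := Module.finrank_mul_finrank Fq ↥K F
    rw [hdK, hn] at h2
    rw [← h2, Nat.mul_div_cancel_left _ hd0]
  -- dimension of restricted scalars
  have hdim : ∀ W : Submodule ↥K F,
      finrank Fq ↥(W.restrictScalars Fq) = d * finrank ↥K ↥W := by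
    intro W
    haveI : FiniteDimensional ↥K ↥W := Module.Finite.of_finite
    have e1 := (Submodule.restrictScalarsEquiv Fq ↥K F W).restrictScalars Fq
    rw [e1.finrank_eq]
    rw [← Module.finrank_mul_finrank Fq ↥K ↥W, hdK]
  -- turning a member of Cdd into a K-submodule
  let mkW : ∀ V : Submodule Fq F, (∀ c x : F, c ^ q ^ d = c → x ∈ V → c * x ∈ V) →
      Submodule ↥K F := fun V hV =>
    { carrier := ↑V
      add_mem' := fun {a b} ha hb => V.add_mem ha hb
      zero_mem' := V.zero_mem
      smul_mem' := fun c x hx => by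
        rw [Subfield.smul_def]
        exact hV c x c.2 hx }
  have mkW_restrict : ∀ V hV, (mkW V hV).restrictScalars Fq = V := fun V hV =>
    SetLike.ext fun x => Iff.rfl
  have mkW_carrier : ∀ V hV (x : F), x ∈ mkW V hV ↔ x ∈ V := fun V hV x => Iff.rfl
  refine ⟨?_, ?_, ?_⟩
  · -- cyclic
    rintro V ⟨hVk, hVc⟩ α hα
    have hinj : Function.Injective (LinearMap.mulLeft Fq α) := fun x y hxy =>
      mul_left_cancel₀ hα hxy
    constructor
    · rw [← (Submodule.equivMapOfInjective _ hinj V).finrank_eq]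
      exact hVk
    · intro c x hc hx
      rw [Submodule.mem_map] at hx ⊢
      obtain ⟨y, hy, rfl⟩ := hx
      exact ⟨c * y, hVc c y hc hy, by
        simp only [LinearMap.mulLeft_apply]; ring⟩
  · -- cardinality
    have hrk : k / d ≤ finrank ↥K F := by
      rw [hnK]
      exact Nat.div_le_div_right hkn.le
    have e : ↥(Cdd q d k Fq F) ≃ {W : Submodule ↥K F // finrank ↥K ↥W = k / d} :=
      { toFun := fun V => ⟨mkW V.1 V.2.2, by
          have h1 := hdim (mkW V.1 V.2.2)
          rw [mkW_restrict V.1 V.2.2] at h1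
          have h2 : d * finrank ↥K ↥(mkW V.1 V.2.2) = k := by rw [← h1]; exact V.2.1
          conv_rhs => rw [← h2, Nat.mul_div_cancel_left _ hd0]⟩
        invFun := fun W => ⟨W.1.restrictScalars Fq, by
          constructor
          · rw [hdim W.1, W.2, Nat.mul_div_cancel' hdk]
          · intro c x hc hx
            rw [Submodule.restrictScalars_mem] at hx ⊢
            have hs := W.1.smul_mem (⟨c, (hKmem c).mpr hc⟩ : ↥K) hx
            rwa [Subfield.smul_def] at hs⟩
        left_inv := fun V => Subtype.ext (mkW_restrict V.1 V.2.2)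
        right_inv := fun W => Subtype.ext (SetLike.ext fun x => Iff.rfl) }
    rw [← Nat.card_coe_set_eq, Nat.card_congr e]
    have hcount := count_subspaces (K := ↥K) (V := F) (k / d) hrk
    rw [hKcard, hnK] at hcount
    have hBpos : 0 < ∏ i ∈ Finset.range (k / d), ((q ^ d) ^ (k / d) - (q ^ d) ^ i) := by
      apply Finset.prod_pos
      intro i hi
      rw [Finset.mem_range] at hi
      have := Nat.pow_lt_pow_right (Nat.one_lt_pow hd0.ne' hq1) hi
      omega
    rw [gaussBinom]
    exact (Nat.div_eq_of_eq_mul_left hBpos hcount.symm).symm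
  · -- distance
    rintro U ⟨hUk, hUc⟩ V ⟨hVk, hVc⟩ hUV
    haveI : FiniteDimensional Fq F := Module.Finite.of_finite
    have hinf : ∀ c x : F, c ^ q ^ d = c → x ∈ U ⊓ V → c * x ∈ U ⊓ V := fun c x hc hx =>
      ⟨hUc c x hc hx.1, hVc c x hc hx.2⟩
    have h1 := hdim (mkW (U ⊓ V) hinf)
    rw [mkW_restrict _ hinf] at h1
    have hlt : finrank Fq ↥(U ⊓ V) < k := by
      have hle : U ⊓ V ≤ U := inf_le_left
      have hne : U ⊓ V ≠ U := by
        intro h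
        apply hUV
        have hUleV : U ≤ V := by rw [← h]; exact inf_le_right
        exact Submodule.eq_of_le_of_finrank_eq hUleV (hUk.trans hVk.symm)
      have := Submodule.finrank_lt_finrank_of_lt (lt_of_le_of_ne hle hne)
      rw [hUk] at this
      exact this
    -- d ∣ finrank, finrank < k, d ∣ k ⇒ finrank ≤ k - d
    obtain ⟨a, ha⟩ := hdk
    set m := finrank Fq ↥(U ⊓ V)
    set b := finrank ↥K ↥(mkW (U ⊓ V) hinf)
    have hba : b < a := by
      by_contra hcon
      push_neg at hcon
      have : k ≤ m := by
        rw [ha, h1]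
        exact Nat.mul_le_mul_left d hcon
      omega
    have : m + d ≤ k := by
      rw [h1, ha, ← Nat.mul_succ]
      exact Nat.mul_le_mul_left d hba
    omega
end

section
/- For 0 < k < n, the Gaussian binomial coefficient satisfies [n choose k]_q = sum over d dividing gcd(n,k) of ((q^n - 1)/(q^d - 1)) * M_{q^d}(n/d, k/d), where M_Q(m,r) denotes the number of orbits of size (Q^m - 1)/(Q - 1) (full length orbits) under the action of F_{Q^m}^* on the r-dimensional F_Q-subspaces of F_{Q^m}. -/
open Pointwise

def subspaceSets (q d k : ℕ) (F : Type*) [Field F] : Set (Set F) :=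
  {S | 0 ∈ S ∧ (∀ x ∈ S, ∀ y ∈ S, x + y ∈ S) ∧
       (∀ c x : F, c ^ q ^ d = c → x ∈ S → c * x ∈ S) ∧ S.ncard = q ^ k}

noncomputable def fullOrbitCount (q d n k : ℕ) (F : Type*) [Field F] : ℕ :=
  Set.ncard {O : Set (Set F) |
    (∃ S ∈ subspaceSets q d k F, O = {T | ∃ α : F, α ≠ 0 ∧ T = α • S}) ∧
    O.ncard = (q ^ n - 1) / (q ^ d - 1)}

/-! ### Auxiliary definitions -/

def Dset {F : Type*} [Field F] (S : Set F) : Set F := {c | ∀ x ∈ S, c * x ∈ S}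

def orb {F : Type*} [Field F] (S : Set F) : Set (Set F) :=
  {T | ∃ α : F, α ≠ 0 ∧ T = α • S}

noncomputable def gOf {F : Type*} [Field F] (q : ℕ) (O : Set (Set F)) : ℕ :=
  Nat.log q (Set.ncard {c : F | ∀ T ∈ O, ∀ x ∈ T, c * x ∈ T})

section Aux

variable {F : Type*} [Field F] [Fintype F] {q n k : ℕ}

lemma pow_pow_fixed_s19 {c : F} (h : c ^ q = c) (d : ℕ) : c ^ q ^ d = c := by
  induction d with
  | zero => simpa using h ▸ pow_one c
  | succ d ih => rw [pow_succ, pow_mul, ih, h]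

lemma sub_one_dvd_sub_one {d m : ℕ} (h : d ∣ m) : q ^ d - 1 ∣ q ^ m - 1 := by
  obtain ⟨r, rfl⟩ := h
  have := Nat.sub_dvd_pow_sub_pow (q ^ d) 1 r
  simpa [← pow_mul] using this

end Aux

section Aux2
open Polynomial
variable {F : Type*} [Field F] [Fintype F] {q n k : ℕ}

lemma exists_pow_hom {q n : ℕ} (hq : 1 < q) (hn : 0 < n) (hF : Fintype.card F = q ^ n) :
    ∃ f : F →+* F, ∀ x, f x = x ^ q := by
  set p := ringChar F with hp'
  haveI : CharP F p := ringChar.charP F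
  haveI : Fact p.Prime := ⟨CharP.char_is_prime F p⟩
  obtain ⟨s, hp, hcard⟩ := FiniteField.card F p
  have hqd : q ∣ p ^ (s : ℕ) := by
    rw [← hcard, hF]
    exact dvd_pow_self q hn.ne'
  obtain ⟨u, hus, hqu⟩ := (Nat.dvd_prime_pow hp).1 hqd
  exact ⟨iterateFrobenius F p u, fun x => by rw [iterateFrobenius_def, hqu]⟩

/-- iterated: x ^ q ^ d as a ring hom -/

lemma exists_pow_pow_hom {q n : ℕ} (hq : 1 < q) (hn : 0 < n) (hF : Fintype.card F = q ^ n)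
    (d : ℕ) : ∃ f : F →+* F, ∀ x, f x = x ^ q ^ d := by
  obtain ⟨f, hf⟩ := exists_pow_hom hq hn hF
  induction d with
  | zero => exact ⟨RingHom.id F, fun x => by simp⟩
  | succ d ih =>
      obtain ⟨g, hg⟩ := ih
      exact ⟨f.comp g, fun x => by
        simp [hf, hg, ← pow_mul, pow_succ]⟩

/-- the subfield of elements fixed by x ↦ x^(q^d) -/

lemma exists_subfield_eq {q n : ℕ} (hq : 1 < q) (hn : 0 < n) (hF : Fintype.card F = q ^ n)
    (d : ℕ) : ∃ K : Subfield F, (K : Set F) = {c : F | c ^ q ^ d = c} := by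
  obtain ⟨f, hf⟩ := exists_pow_pow_hom hq hn hF d
  refine ⟨{ carrier := {c : F | c ^ q ^ d = c}
            mul_mem' := ?_, one_mem' := ?_, add_mem' := ?_, zero_mem' := ?_
            neg_mem' := ?_, inv_mem' := ?_ }, rfl⟩
  · intro a b ha hb
    simp only [Set.mem_setOf_eq, ← hf] at *
    rw [map_mul, ha, hb]
  · simp only [Set.mem_setOf_eq, one_pow]
  · intro a b ha hb
    simp only [Set.mem_setOf_eq, ← hf] at *
    rw [map_add, ha, hb]
  · simp only [Set.mem_setOf_eq, ← hf, map_zero]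
  · intro a ha
    simp only [Set.mem_setOf_eq, ← hf] at *
    rw [map_neg, ha]
  · intro a ha
    simp only [Set.mem_setOf_eq, ← hf] at *
    rw [map_inv₀, ha]

lemma ncard_pow_fixed_le (m : ℕ) (hm : 1 < m) : Set.ncard {c : F | c ^ m = c} ≤ m := by
  classical
  set P : F[X] := X ^ m - X with hP
  have hdeg : P.degree = m := by
    rw [hP]
    rw [degree_sub_eq_left_of_degree_lt]
    · exact degree_X_pow m
    · rw [degree_X_pow, degree_X]
      exact_mod_cast hm
  have hP0 : P ≠ 0 := by
    intro h
    rw [h, degree_zero] at hdeg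
    exact absurd hdeg (by simp)
  have hsub : {c : F | c ^ m = c} ⊆ ↑P.roots.toFinset := by
    intro c hc
    simp only [Set.mem_setOf_eq] at hc
    simp only [Finset.coe_sort_coe, Multiset.mem_toFinset, Finset.mem_coe, mem_roots hP0,
      IsRoot.def]
    rw [hP]
    simp only [eval_sub, eval_pow, eval_X, hc, sub_self]
  calc Set.ncard {c : F | c ^ m = c} ≤ P.roots.toFinset.card := by
        simpa using Set.ncard_le_ncard hsub (Set.toFinite _)
    _ ≤ Multiset.card P.roots := Multiset.toFinset_card_le _
    _ ≤ P.natDegree := P.card_roots' 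
    _ = m := natDegree_eq_of_degree_eq_some hdeg

lemma ncard_K1 {q n : ℕ} (hq : 1 < q) (hn : 0 < n) (hF : Fintype.card F = q ^ n) :
    Set.ncard {c : F | c ^ q = c} = q := by
  classical
  have hq1 : q - 1 ∣ q ^ n - 1 := by simpa using Nat.sub_dvd_pow_sub_pow q 1 n
  have hcardu : Nat.card Fˣ = q ^ n - 1 := by
    rw [Nat.card_eq_fintype_card, Fintype.card_units, hF]
  obtain ⟨g, hg⟩ := IsCyclic.exists_ofOrder_eq_natCard (α := Fˣ)
  rw [hcardu] at hg
  set m := (q ^ n - 1) / (q - 1) with hm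
  have hqn1 : 0 < q ^ n - 1 := by
    have : 1 < q ^ n := Nat.one_lt_pow hn.ne' hq
    omega
  have hmd : m ∣ q ^ n - 1 := Nat.div_dvd_of_dvd hq1
  have hord : orderOf (g ^ m) = q - 1 := by
    rw [orderOf_pow, hg, Nat.gcd_eq_right hmd, hm, Nat.div_div_self hq1 hqn1.ne']
  have hprim : IsPrimitiveRoot ((g ^ m : Fˣ) : F) (q - 1) := by
    rw [← hord]
    exact IsPrimitiveRoot.coe_units_iff.mpr (IsPrimitiveRoot.orderOf _)
  have hq1pos : 0 < q - 1 := by omega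
  have hset : {c : F | c ^ q = c} = insert (0 : F) ↑(nthRootsFinset (q - 1) (1 : F)) := by
    ext c
    simp only [Set.mem_setOf_eq, Set.mem_insert_iff, Finset.coe_sort_coe, Finset.mem_coe,
      mem_nthRootsFinset hq1pos]
    constructor
    · intro hc
      rcases eq_or_ne c 0 with h0 | h0
      · exact Or.inl h0
      · right
        have : c ^ (q - 1) * c = c := by
          rw [← pow_succ]
          rwa [Nat.sub_add_cancel hq.le]
        exact mul_right_cancel₀ h0 (this.trans (one_mul c).symm)
    · rintro (rfl | hc)
      · exact zero_pow (by omega)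
      · calc c ^ q = c ^ (q - 1) * c := by rw [← pow_succ, Nat.sub_add_cancel hq.le]
          _ = c := by rw [hc, one_mul]
  rw [hset, Set.ncard_insert_of_notMem, Set.ncard_coe_finset, hprim.card_nthRootsFinset]
  · omega
  · simp only [Finset.coe_sort_coe, Finset.mem_coe, mem_nthRootsFinset hq1pos]
    intro h
    rw [zero_pow (by omega)] at h
    exact zero_ne_one h

lemma main_struct {q n k : ℕ} (hq : 1 < q) (hn : 0 < n) (hk : 0 < k)
    (hF : Fintype.card F = q ^ n) {S : Set F} (hS : S ∈ subspaceSets q 1 k F) :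
    ∃ e : ℕ, e ∣ n ∧ e ∣ k ∧ 0 < e ∧
      (Dset S).ncard = q ^ e ∧ Dset S = {c : F | c ^ q ^ e = c} := by
  classical
  obtain ⟨h0, hadd, hsmul, hcard⟩ := hS
  obtain ⟨f, hf⟩ := exists_pow_hom hq hn hF
  -- S is closed under negation
  have hneg : ∀ x ∈ S, -x ∈ S := by
    intro x hx
    have h1 : (-1 : F) ^ q ^ 1 = -1 := by
      rw [pow_one, ← hf, map_neg, map_one]
    have := hsmul (-1) x h1 hx
    rwa [neg_one_mul] at this
  -- S is finite
  have hSfin : S.Finite := Set.toFinite S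
  -- Dset S is a subfield
  have hDmul : ∀ a ∈ Dset S, ∀ b ∈ Dset S, a * b ∈ Dset S := by
    intro a ha b hb x hx
    rw [mul_assoc]; exact ha _ (hb _ hx)
  have hDinv : ∀ a ∈ Dset S, a⁻¹ ∈ Dset S := by
    intro a ha
    rcases eq_or_ne a 0 with rfl | h0a
    · simpa using ha
    · intro x hx
      have hmaps : Set.MapsTo (fun y => a * y) S S := fun y hy => ha _ hy
      have hinj : Set.InjOn (fun y => a * y) S := fun y _ z _ h =>
        mul_left_cancel₀ h0a h
      have hbij := (Set.Finite.injOn_iff_bijOn_of_mapsTo hSfin hmaps).1 hinj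
      obtain ⟨y, hy, hxy⟩ := hbij.surjOn hx
      simp only at hxy
      rw [← hxy, ← mul_assoc, inv_mul_cancel₀ h0a, one_mul]
      exact hy
  let DS : Subfield F :=
    { carrier := Dset S
      mul_mem' := fun ha hb => hDmul _ ha _ hb
      one_mem' := fun x hx => by rwa [one_mul]
      add_mem' := fun {a b} ha hb x hx => by
        rw [add_mul]; exact hadd _ (ha _ hx) _ (hb _ hx)
      zero_mem' := fun x hx => by rwa [zero_mul]
      neg_mem' := fun {a} ha x hx => by rw [neg_mul]; exact hneg _ (ha _ hx)
      inv_mem' := fun a ha => hDinv a ha }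
  -- K₁
  obtain ⟨K₁, hK₁⟩ := exists_subfield_eq hq hn hF 1
  have hK₁card : Fintype.card K₁ = q := by
    have : Set.ncard (K₁ : Set F) = q := by
      rw [hK₁]
      have := ncard_K1 hq hn hF
      simpa [pow_one] using this
    rwa [← Nat.card_coe_set_eq, Nat.card_eq_fintype_card, Fintype.card_congr
      (Equiv.refl _)] at this
  have hK₁D : ∀ c : F, c ∈ K₁ → c ∈ Dset S := by
    intro c hc
    rw [← SetLike.mem_coe, hK₁] at hc
    exact fun x hx => hsmul c x hc hx
  -- Dset S as a K₁-submodule of F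
  let W : Submodule K₁ F :=
    { carrier := Dset S
      add_mem' := fun {a b} ha hb => DS.add_mem ha hb
      zero_mem' := DS.zero_mem
      smul_mem' := fun c x hx => by
        have : (c : F) * x ∈ Dset S := hDmul _ (hK₁D _ c.2) _ hx
        simpa [Subfield.smul_def] using this }
  letI : Fintype W := Fintype.ofFinite _
  have hWc : Fintype.card W = (Dset S).ncard := by
    rw [← Nat.card_eq_fintype_card]
    exact Nat.card_coe_set_eq (Dset S)
  have hcardW : (Dset S).ncard = q ^ Module.finrank K₁ W := by
    have h := Module.card_eq_pow_finrank (K := K₁) (V := W)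
    rwa [hK₁card, hWc] at h
  set e := Module.finrank K₁ W with he
  -- e positive
  have he0 : 0 < e := by
    by_contra h
    push_neg at h
    interval_cases e
    have hsub01 : ({0, 1} : Set F) ⊆ Dset S := by
      rintro c (rfl | rfl)
      · exact DS.zero_mem
      · exact DS.one_mem
    have h2 : 2 ≤ (Dset S).ncard := by
      have := Set.ncard_le_ncard hsub01 (Set.toFinite _)
      rwa [Set.ncard_pair (zero_ne_one (α := F))] at this
    rw [hcardW, pow_zero] at h2
    omega
  letI : Fintype DS := Fintype.ofFinite _
  have hDSc : Fintype.card DS = q ^ e := by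
    rw [← Nat.card_eq_fintype_card, ← hcardW]
    exact Nat.card_coe_set_eq (Dset S)
  -- e ∣ n
  have hen : e ∣ n := by
    have h := Module.card_eq_pow_finrank (K := DS) (V := F)
    rw [hF, hDSc, ← pow_mul] at h
    exact Dvd.intro _ (Nat.pow_right_injective hq h).symm
  -- e ∣ k : S is a vector space over DS
  have hek : e ∣ k := by
    let M : Submodule DS F :=
      { carrier := S
        add_mem' := fun {a b} ha hb => hadd _ ha _ hb
        zero_mem' := h0
        smul_mem' := fun c x hx => by
          have : (c : F) * x ∈ S := c.2 x hx
          simpa [Subfield.smul_def] using this }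
    letI : Fintype M := Fintype.ofFinite _
    have hMc : Fintype.card M = q ^ k := by
      rw [← Nat.card_eq_fintype_card, ← hcard]
      exact Nat.card_coe_set_eq S
    have h := Module.card_eq_pow_finrank (K := DS) (V := M)
    rw [hMc, hDSc, ← pow_mul] at h
    exact Dvd.intro _ (Nat.pow_right_injective hq h).symm
  -- Dset S = fixed points of x ↦ x^(q^e)
  have hsub : Dset S ⊆ {c : F | c ^ q ^ e = c} := by
    intro c hc
    have := FiniteField.pow_card (⟨c, hc⟩ : DS)
    rw [hDSc] at this
    have := congrArg (Subtype.val) this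
    simpa using this
  have heq : Dset S = {c : F | c ^ q ^ e = c} := by
    refine Set.eq_of_subset_of_ncard_le hsub ?_ (Set.toFinite _)
    calc Set.ncard {c : F | c ^ q ^ e = c} ≤ q ^ e :=
          ncard_pow_fixed_le _ (Nat.one_lt_pow he0.ne' hq)
      _ = (Dset S).ncard := hcardW.symm
  exact ⟨e, hen, hek, he0, hcardW, heq⟩

lemma mem_orb_self (S : Set F) : S ∈ orb S := ⟨1, one_ne_zero, (one_smul F S).symm⟩

lemma smul_mem_subspaceSets {d : ℕ} {S : Set F} (hS : S ∈ subspaceSets q d k F) {α : F}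
    (hα : α ≠ 0) : α • S ∈ subspaceSets q d k F := by
  obtain ⟨h0, hadd, hsmul, hcard⟩ := hS
  refine ⟨⟨0, h0, smul_zero α⟩, ?_, ?_, ?_⟩
  · rintro x ⟨a, ha, rfl⟩ y ⟨b, hb, rfl⟩
    exact ⟨a + b, hadd a ha b hb, smul_add α a b⟩
  · rintro c x hc ⟨a, ha, rfl⟩
    refine ⟨c * a, hsmul c a hc ha, ?_⟩
    simp [smul_eq_mul]; ring
  · rw [show α • S = (fun x => α * x) '' S from rfl, Set.ncard_image_of_injective _
      (mul_right_injective₀ hα)]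
    exact hcard

lemma orb_eq_of_mem {S T : Set F} (hT : T ∈ orb S) : orb T = orb S := by
  obtain ⟨α, hα, rfl⟩ := hT
  ext U
  constructor
  · rintro ⟨β, hβ, rfl⟩
    exact ⟨β * α, mul_ne_zero hβ hα, smul_smul β α S⟩
  · rintro ⟨γ, hγ, rfl⟩
    refine ⟨γ * α⁻¹, mul_ne_zero hγ (inv_ne_zero hα), ?_⟩
    rw [smul_smul, mul_assoc, inv_mul_cancel₀ hα, mul_one]

lemma Dset_smul {S : Set F} {α : F} (hα : α ≠ 0) : Dset (α • S) = Dset S := by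
  have key : ∀ (T : Set F) (β : F), Dset T ⊆ Dset (β • T) := by
    rintro T β c hc x ⟨a, ha, rfl⟩
    exact ⟨c * a, hc a ha, by simp [smul_eq_mul]; ring⟩
  apply Set.Subset.antisymm
  · have := key (α • S) α⁻¹
    rwa [inv_smul_smul₀ hα] at this
  · exact key S α

lemma smul_eq_iff_mem_Dset {S : Set F} {γ : F} (hγ : γ ≠ 0) :
    γ • S = S ↔ γ ∈ Dset S := by
  constructor
  · intro h x hx
    have : γ • x ∈ γ • S := Set.smul_mem_smul_set hx
    rwa [h, smul_eq_mul] at this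
  · intro h
    have hsub : γ • S ⊆ S := by
      rintro x ⟨a, ha, rfl⟩
      exact h a ha
    refine Set.eq_of_subset_of_ncard_le hsub ?_ (Set.toFinite _)
    rw [show γ • S = (fun x => γ * x) '' S from rfl,
      Set.ncard_image_of_injective _ (mul_right_injective₀ hγ)]

lemma orb_card_mul {e : ℕ} (hq : 1 < q) (hF : Fintype.card F = q ^ n)
    {S : Set F} (h0D : (0 : F) ∈ Dset S) (hDcard : (Dset S).ncard = q ^ e) :
    (orb S).ncard * (q ^ e - 1) = q ^ n - 1 := by
  classical
  set A₀ : Finset F := Finset.univ.erase 0 with hA₀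
  set B : Finset (Set F) := (orb S).toFinite.toFinset with hB
  have hmaps : ∀ α ∈ A₀, α • S ∈ B := by
    intro α hα
    rw [hB, Set.Finite.mem_toFinset]
    exact ⟨α, Finset.ne_of_mem_erase hα, rfl⟩
  have hcount := Finset.card_eq_sum_card_fiberwise hmaps
  have hA₀card : A₀.card = q ^ n - 1 := by
    rw [hA₀, Finset.card_erase_of_mem (Finset.mem_univ 0), Finset.card_univ, hF]
  have hfiber : ∀ T ∈ B, (A₀.filter (fun α => α • S = T)).card = q ^ e - 1 := by
    intro T hT
    rw [hB, Set.Finite.mem_toFinset] at hT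
    obtain ⟨β, hβ, rfl⟩ := hT
    set D₀ : Finset F := ((Dset S) \ {0}).toFinite.toFinset with hD₀
    have himage : A₀.filter (fun α => α • S = β • S) = D₀.image (fun c => β * c) := by
      ext α
      simp only [Finset.mem_filter, Finset.mem_image, hD₀, Set.Finite.mem_toFinset,
        Set.mem_diff, Set.mem_singleton_iff, hA₀, Finset.mem_erase, Finset.mem_univ,
        and_true, true_and]
      constructor
      · rintro ⟨hα, hαS⟩
        have hba : β⁻¹ * α ≠ 0 := mul_ne_zero (inv_ne_zero hβ) hα
        refine ⟨β⁻¹ * α, ⟨?_, hba⟩, mul_inv_cancel_left₀ hβ α⟩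
        rw [← smul_eq_iff_mem_Dset hba, ← smul_smul, hαS, inv_smul_smul₀ hβ]
      · rintro ⟨c, ⟨hcD, hc0⟩, rfl⟩
        refine ⟨mul_ne_zero hβ hc0, ?_⟩
        rw [← smul_smul, smul_eq_iff_mem_Dset hc0 |>.mpr hcD]
    have hD₀card : D₀.card = q ^ e - 1 := by
      rw [hD₀, ← Set.ncard_eq_toFinset_card _ ((Dset S) \ {0}).toFinite,
        Set.ncard_diff_singleton_of_mem h0D, hDcard]
    rw [himage, Finset.card_image_of_injective _ (mul_right_injective₀ hβ), hD₀card]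
  rw [hA₀card, Finset.sum_congr rfl hfiber, Finset.sum_const, smul_eq_mul] at hcount
  rw [Set.ncard_eq_toFinset_card _ ((orb S).toFinite)]
  exact hcount.symm

set_option maxHeartbeats 1000000 in
lemma grass_count (hq : 1 < q) (hn : 0 < n) (hk0 : 0 < k) (hk : k ≤ n)
    (hF : Fintype.card F = q ^ n)
    (K₁ : Subfield F) (hK₁ : (K₁ : Set F) = {c : F | c ^ q ^ 1 = c})
    (hK₁cardN : Nat.card K₁ = q) :
    (subspaceSets q 1 k F).ncard * ∏ i ∈ Finset.range k, (q ^ k - q ^ i) =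
      ∏ i ∈ Finset.range k, (q ^ n - q ^ i) := by
  classical
  letI : Fintype K₁ := Fintype.ofFinite _
  haveI : Nonempty (Fin k) := ⟨⟨0, hk0⟩⟩
  have hK₁card : Fintype.card K₁ = q := by rw [← Nat.card_eq_fintype_card]; exact hK₁cardN
  have hfr : Module.finrank K₁ F = n := by
    have h := Module.card_eq_pow_finrank (K := K₁) (V := F)
    rw [hF, hK₁card] at h
    exact (Nat.pow_right_injective hq h).symm
  -- count of linearly independent k-tuples in F
  have hLI : Nat.card { s : Fin k → F // LinearIndependent K₁ s } =
      ∏ i ∈ Finset.range k, (q ^ n - q ^ i) := by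
    have h := card_linearIndependent (K := K₁) (V := F) (k := k) (by rw [hfr]; exact hk)
    rw [h, hK₁card, hfr]
    rw [Fin.prod_univ_eq_prod_range (fun i => q ^ n - q ^ i) k]
  -- submodule attached to an element of subspaceSets
  have hsubmod : ∀ T ∈ subspaceSets q 1 k F, ∃ W : Submodule K₁ F, (W : Set F) = T := by
    intro T hT
    obtain ⟨h0, hadd, hsmul, hcard⟩ := hT
    refine ⟨{ carrier := T
              add_mem' := fun {a b} ha hb => hadd a ha b hb
              zero_mem' := h0
              smul_mem' := fun c x hx => by
                have hc : (c : F) ^ q ^ 1 = (c : F) := by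
                  have := c.2
                  rw [← SetLike.mem_coe, hK₁] at this
                  exact this
                have : (c : F) * x ∈ T := hsmul _ x hc hx
                simpa [Subfield.smul_def] using this }, rfl⟩
  -- finrank of such a submodule is k
  have hfrW : ∀ (W : Submodule K₁ F), (W : Set F).ncard = q ^ k →
      Module.finrank K₁ W = k := by
    intro W hWc
    letI : Fintype W := Fintype.ofFinite _
    have h := Module.card_eq_pow_finrank (K := K₁) (V := W)
    rw [hK₁card] at h
    have hWc' : Fintype.card W = q ^ k := by
      rw [← Nat.card_eq_fintype_card, ← hWc]
      exact Nat.card_coe_set_eq _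
    rw [hWc'] at h
    exact (Nat.pow_right_injective hq h.symm)
  -- the fiber count
  have hfiber : ∀ T ∈ subspaceSets q 1 k F,
      {s : Fin k → F | LinearIndependent K₁ s ∧ ↑(Submodule.span K₁ (Set.range s)) = T}.ncard
        = ∏ i ∈ Finset.range k, (q ^ k - q ^ i) := by
    intro T hT
    obtain ⟨W, hW⟩ := hsubmod T hT
    haveI : Nonempty W := ⟨0⟩
    have hfrk : Module.finrank K₁ W = k := hfrW W (by rw [hW]; exact hT.2.2.2)
    -- equivalence with LI tuples in W
    have hequiv : {s : Fin k → F | LinearIndependent K₁ s ∧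
        ↑(Submodule.span K₁ (Set.range s)) = T} ≃ { s : Fin k → W // LinearIndependent K₁ s } := by
      refine ⟨fun s => ⟨fun i => ⟨s.1 i, ?_⟩, ?_⟩, fun s => ⟨fun i => (s.1 i : F), ?_, ?_⟩,
        ?_, ?_⟩
      · have hmem : s.1 i ∈ Submodule.span K₁ (Set.range s.1) :=
          Submodule.subset_span (Set.mem_range_self i)
        have hmem3 : (s.1 : Fin k → F) i ∈
            (↑(Submodule.span K₁ (Set.range (s.1 : Fin k → F))) : Set F) := hmem
        rw [s.2.2] at hmem3
        have hmem2 : s.1 i ∈ (W : Set F) := by rw [hW]; exact hmem3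
        exact hmem2
      · have h := s.2.1
        exact h.of_comp W.subtype
      · have h := s.2.map' W.subtype W.ker_subtype
        exact h
      · -- span of the images is T
        have hsp : Submodule.span K₁ (Set.range s.1) = ⊤ :=
          LinearIndependent.span_eq_top_of_card_eq_finrank s.2
            (by rw [Fintype.card_fin, hfrk])
        have : Submodule.span K₁ (Set.range (fun i => (s.1 i : F))) =
            Submodule.map W.subtype (Submodule.span K₁ (Set.range s.1)) := by
          rw [Submodule.map_span]
          congr 1
          ext x
          simp [Set.mem_range]
        rw [this, hsp, Submodule.map_subtype_top, hW]
      · intro s; ext i; rfl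
      · intro s; ext i; rfl
    rw [← Nat.card_coe_set_eq, Nat.card_congr hequiv]
    have h := card_linearIndependent (K := K₁) (V := W) (k := k) (le_of_eq hfrk.symm)
    rw [h, hK₁card, hfrk, Fin.prod_univ_eq_prod_range (fun i => q ^ k - q ^ i) k]
  -- fiberwise counting
  set A : Finset (Set F) := (subspaceSets q 1 k F).toFinite.toFinset with hA
  set LIk : Finset (Fin k → F) := {s : Fin k → F | LinearIndependent K₁ s}.toFinite.toFinset
    with hLIk
  have hmaps : ∀ s ∈ LIk, (↑(Submodule.span K₁ (Set.range s)) : Set F) ∈ A := by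
    intro s hs
    rw [hLIk, Set.Finite.mem_toFinset] at hs
    rw [hA, Set.Finite.mem_toFinset]
    obtain ⟨W', hW'⟩ : ∃ W' : Submodule K₁ F, W' = Submodule.span K₁ (Set.range s) := ⟨_, rfl⟩
    refine ⟨(Submodule.span K₁ (Set.range s)).zero_mem, fun x hx y hy =>
      Submodule.add_mem _ hx hy, ?_, ?_⟩
    · intro c x hc hx
      have hcK : c ∈ K₁ := by rw [← SetLike.mem_coe, hK₁]; exact hc
      have := Submodule.smul_mem (Submodule.span K₁ (Set.range s)) ⟨c, hcK⟩ hx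
      simpa [Subfield.smul_def] using this
    · -- cardinality of the span
      set V' : Submodule K₁ F := Submodule.span K₁ (Set.range s) with hV'
      letI : Fintype V' := Fintype.ofFinite _
      have hfrV : Module.finrank K₁ V' = k := by
        rw [hV', finrank_span_eq_card hs, Fintype.card_fin]
      have h := Module.card_eq_pow_finrank (K := K₁) (V := V')
      rw [hK₁card, hfrV] at h
      have h2 : Nat.card V' = q ^ k := by
        rw [Nat.card_eq_fintype_card]; exact h
      rw [← Nat.card_coe_set_eq]
      exact h2
  have hcount := Finset.card_eq_sum_card_fiberwise hmaps
  have hLIkcard : LIk.card = ∏ i ∈ Finset.range k, (q ^ n - q ^ i) := by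
    rw [hLIk, ← Set.ncard_eq_toFinset_card _ _, ← Nat.card_coe_set_eq, ← hLI]
    rfl
  have hfib' : ∀ T ∈ A, (LIk.filter
      (fun s => (↑(Submodule.span K₁ (Set.range s)) : Set F) = T)).card =
      ∏ i ∈ Finset.range k, (q ^ k - q ^ i) := by
    intro T hT
    rw [hA, Set.Finite.mem_toFinset] at hT
    rw [← hfiber T hT]
    rw [Set.ncard_eq_toFinset_card _ ({s : Fin k → F | LinearIndependent K₁ s ∧
      ↑(Submodule.span K₁ (Set.range s)) = T}).toFinite]
    congr 1
    ext s
    simp [hLIk, Set.Finite.mem_toFinset]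
  rw [hLIkcard, Finset.sum_congr rfl hfib', Finset.sum_const, smul_eq_mul] at hcount
  rw [Set.ncard_eq_toFinset_card _ ((subspaceSets q 1 k F).toFinite)]
  exact hcount.symm

end Aux2

set_option maxHeartbeats 1000000 in
theorem stmt19 (q n k : ℕ) (hq : 1 < q) (hk : 0 < k) (hkn : k < n)
    (F : Type*) [Field F] [Fintype F] (hF : Fintype.card F = q ^ n) :
    gaussBinom q n k =
      ∑ d ∈ (Nat.gcd n k).divisors,
        ((q ^ n - 1) / (q ^ d - 1)) * fullOrbitCount q d n k F := by
  classical
  have hn : 0 < n := lt_trans hk hkn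
  obtain ⟨K₁, hK₁⟩ := exists_subfield_eq hq hn hF 1
  have hK₁cardN : Nat.card K₁ = q := by
    have h1 : ((K₁ : Set F)).ncard = q := by
      rw [hK₁]
      simpa [pow_one] using ncard_K1 hq hn hF
    have h2 : Nat.card K₁ = ((K₁ : Set F)).ncard := Nat.card_coe_set_eq (K₁ : Set F)
    rw [h2, h1]
  set 𝒜 : Set (Set F) := subspaceSets q 1 k F with h𝒜
  have hprodpos : 0 < ∏ i ∈ Finset.range k, (q ^ k - q ^ i) := by
    apply Finset.prod_pos
    intro i hi
    rw [Finset.mem_range] at hi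
    have := Nat.pow_lt_pow_right hq hi
    omega
  have hgauss : gaussBinom q n k = 𝒜.ncard := by
    have hgr := grass_count hq hn hk (le_of_lt hkn) hF K₁ hK₁ hK₁cardN
    rw [gaussBinom, ← hgr, Nat.mul_div_cancel _ hprodpos]
  set A : Finset (Set F) := 𝒜.toFinite.toFinset with hA
  set B : Finset (Set (Set F)) := A.image orb with hB
  have hms : ∀ S ∈ 𝒜, ∃ e : ℕ, e ∣ n ∧ e ∣ k ∧ 0 < e ∧ (Dset S).ncard = q ^ e ∧
      Dset S = {c : F | c ^ q ^ e = c} := fun S hS => main_struct hq hn hk hF hS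
  have hDD : ∀ S : Set F, {c : F | ∀ T ∈ orb S, ∀ x ∈ T, c * x ∈ T} = Dset S := by
    intro S
    ext c
    constructor
    · intro hc x hx
      exact hc S (mem_orb_self S) x hx
    · rintro hc T ⟨α, hα, rfl⟩
      have h2 : c ∈ Dset (α • S) := (Dset_smul (S := S) hα).symm ▸ hc
      exact h2
  have hgOf : ∀ S : Set F, ∀ e : ℕ, (Dset S).ncard = q ^ e → gOf q (orb S) = e := by
    intro S e he
    rw [gOf, hDD, he, Nat.log_pow hq]
  have horbcard : ∀ S ∈ 𝒜, ∀ e : ℕ, (Dset S).ncard = q ^ e → 0 < e →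
      (orb S).ncard = (q ^ n - 1) / (q ^ e - 1) := by
    intro S hS e he he0
    have h0D : (0 : F) ∈ Dset S := fun x hx => by rw [zero_mul]; exact hS.1
    have h := orb_card_mul hq hF h0D he
    have hepos : 0 < q ^ e - 1 := by
      have := Nat.one_lt_pow he0.ne' hq
      omega
    exact (Nat.div_eq_of_eq_mul_left hepos h.symm).symm
  -- step 1
  have hmaps1 : ∀ S ∈ A, orb S ∈ B := fun S hS => Finset.mem_image_of_mem orb hS
  have hstep1 := Finset.card_eq_sum_card_fiberwise hmaps1
  have hfib1 : ∀ O ∈ B, (A.filter (fun S => orb S = O)).card = O.ncard := by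
    intro O hO
    rw [hB] at hO
    obtain ⟨S₀, hS₀A, rfl⟩ := Finset.mem_image.1 hO
    rw [hA, Set.Finite.mem_toFinset] at hS₀A
    have hset : ((A.filter (fun S => orb S = orb S₀)) : Set (Set F)) = orb S₀ := by
      ext S
      simp only [Finset.coe_filter, Set.mem_setOf_eq, hA, Set.Finite.mem_toFinset]
      constructor
      · rintro ⟨hSA, hSorb⟩
        rw [← hSorb]
        exact mem_orb_self S
      · intro hS
        obtain ⟨α, hα, rfl⟩ := hS
        exact ⟨smul_mem_subspaceSets hS₀A hα, orb_eq_of_mem ⟨α, hα, rfl⟩⟩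
    calc (A.filter (fun S => orb S = orb S₀)).card
        = ((A.filter (fun S => orb S = orb S₀) : Set (Set F))).ncard := by
          rw [Set.ncard_coe_finset]
      _ = (orb S₀).ncard := by rw [hset]
  -- step 2
  have hgB : ∀ O ∈ B, gOf q O ∈ (Nat.gcd n k).divisors := by
    intro O hO
    rw [hB] at hO
    obtain ⟨S, hSA, rfl⟩ := Finset.mem_image.1 hO
    rw [hA, Set.Finite.mem_toFinset] at hSA
    obtain ⟨e, hen, hek, he0, hecard, heq⟩ := hms S hSA
    rw [hgOf S e hecard, Nat.mem_divisors]
    exact ⟨Nat.dvd_gcd hen hek, fun h => hn.ne' (Nat.eq_zero_of_gcd_eq_zero_left h)⟩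
  have hstep2 := Finset.sum_fiberwise_of_maps_to hgB (fun O => O.ncard)
  -- step 3
  have hfib2 : ∀ d ∈ (Nat.gcd n k).divisors,
      B.filter (fun O => gOf q O = d) =
      {O : Set (Set F) |
        (∃ S ∈ subspaceSets q d k F, O = {T | ∃ α : F, α ≠ 0 ∧ T = α • S}) ∧
        O.ncard = (q ^ n - 1) / (q ^ d - 1)}.toFinite.toFinset := by
    intro d hd
    rw [Nat.mem_divisors] at hd
    have hdn : d ∣ n := hd.1.trans (Nat.gcd_dvd_left n k)
    have hd0 : 0 < d := Nat.pos_of_dvd_of_pos hdn hn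
    ext O
    rw [Finset.mem_filter, Set.Finite.mem_toFinset, Set.mem_setOf_eq]
    constructor
    · rintro ⟨hOB, hgO⟩
      rw [hB] at hOB
      obtain ⟨S, hSA, rfl⟩ := Finset.mem_image.1 hOB
      rw [hA, Set.Finite.mem_toFinset] at hSA
      obtain ⟨e, hen, hek, he0, hecard, heq⟩ := hms S hSA
      have hed : e = d := by rw [← hgOf S e hecard]; exact hgO
      subst hed
      have horb := horbcard S hSA e hecard he0
      obtain ⟨h0, hadd, hsmul, hcard⟩ := hSA
      refine ⟨⟨S, ⟨h0, hadd, ?_, hcard⟩, rfl⟩, horb⟩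
      intro c x hc hx
      have hcD : c ∈ Dset S := by rw [heq]; exact hc
      exact hcD x hx
    · rintro ⟨⟨S, hSd, rfl⟩, hOcard⟩
      obtain ⟨h0, hadd, hsmul, hcard⟩ := hSd
      have hS𝒜 : S ∈ 𝒜 := by
        refine ⟨h0, hadd, ?_, hcard⟩
        intro c x hc hx
        exact hsmul c x (pow_pow_fixed_s19 (by rwa [pow_one] at hc) d) hx
      obtain ⟨e, hen, hek, he0, hecard, heq⟩ := hms S hS𝒜
      have hOorb : {T | ∃ α : F, α ≠ 0 ∧ T = α • S} = orb S := rfl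
      rw [hOorb] at hOcard ⊢
      have hed : e = d := by
        have h0D : (0 : F) ∈ Dset S := fun x hx => by rw [zero_mul]; exact h0
        have hmul := orb_card_mul hq hF h0D hecard
        have hdvd : q ^ d - 1 ∣ q ^ n - 1 := sub_one_dvd_sub_one hdn
        have hQn : 0 < q ^ n - 1 := by
          have := Nat.one_lt_pow hn.ne' hq
          omega
        have hdpos : 0 < q ^ d - 1 := by
          have := Nat.one_lt_pow hd0.ne' hq
          omega
        have hmul2 : (orb S).ncard * (q ^ d - 1) = q ^ n - 1 := by
          rw [hOcard, Nat.div_mul_cancel hdvd]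
        have hpos : 0 < (orb S).ncard := by
          rcases Nat.eq_zero_or_pos (orb S).ncard with h | h
          · rw [h, zero_mul] at hmul2; omega
          · exact h
        have hsub : q ^ e - 1 = q ^ d - 1 :=
          Nat.eq_of_mul_eq_mul_left hpos (by rw [hmul, hmul2])
        have hqe : q ^ e = q ^ d := by
          have h1 : 1 ≤ q ^ e := Nat.one_le_pow _ _ (by omega)
          have h2 : 1 ≤ q ^ d := Nat.one_le_pow _ _ (by omega)
          omega
        exact Nat.pow_right_injective hq hqe
      constructor
      · rw [hB]
        apply Finset.mem_image_of_mem
        rw [hA, Set.Finite.mem_toFinset]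
        exact hS𝒜
      · rw [hgOf S e hecard, hed]
  -- assemble
  rw [hgauss]
  have hAcard : 𝒜.ncard = A.card := by rw [hA, Set.ncard_eq_toFinset_card _ 𝒜.toFinite]
  rw [hAcard, hstep1, Finset.sum_congr rfl hfib1, ← hstep2]
  apply Finset.sum_congr rfl
  intro d hd
  have hval : ∀ O ∈ B.filter (fun O => gOf q O = d),
      O.ncard = (q ^ n - 1) / (q ^ d - 1) := by
    intro O hO
    rw [hfib2 d hd, Set.Finite.mem_toFinset, Set.mem_setOf_eq] at hO
    exact hO.2
  rw [Finset.sum_congr rfl hval, Finset.sum_const, smul_eq_mul, hfib2 d hd,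
    ← Set.ncard_eq_toFinset_card _ _, mul_comm]
  rfl
end
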